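/- arXiv:1409.5044 — 6 statements merged into one kernel-verified Lean document; each statement's English description precedes it below -/
import Mathlib

section
/- Let k be a field, n ∈ ℕ, let C₀ ⊆ ℝⁿ be any subset, and let f₁,…,f_r be nonzero Laurent polynomials in n variables over k. Then every fᵢ (i = 1,…,r) is C₀-balanced if and only if the product f₁⋯f_r is C₀-balanced. -/
noncomputable section

/-- Standard inner product of an integer vector with a real vector. -/
def ipR {n : ℕ} (α : Fin n → ℤ) (ω : Fin n → ℝ) : ℝ := ∑ i, (α i : ℝ) * ω i

open scoped Classical in
/-- Initial form `init_ω(f)` of a Laurent polynomial `f` in the direction `ω`: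
keep exactly the coefficients at those `α ∈ supp f` where `⟨α, ω⟩` attains its
minimum over `supp f`. -/
def initForm {k : Type*} [CommRing k] {n : ℕ} (ω : Fin n → ℝ)
    (f : AddMonoidAlgebra k (Fin n → ℤ)) : AddMonoidAlgebra k (Fin n → ℤ) :=
  AddMonoidAlgebra.ofCoeff
    (Finsupp.filter (fun α => ∀ β ∈ f.coeff.support, ipR α ω ≤ ipR β ω) f.coeff)

/-- `f` is `C`-balanced: `ω ↦ initForm ω f` is constant on `C`. -/
def IsBalanced {k : Type*} [CommRing k] {n : ℕ} (C : Set (Fin n → ℝ))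
    (f : AddMonoidAlgebra k (Fin n → ℤ)) : Prop :=
  ∀ ω ∈ C, ∀ ω' ∈ C, initForm ω f = initForm ω' f

open scoped Classical

section Aux

variable {k : Type*} [Field k] {n : ℕ}

lemma ipR_add (α β : Fin n → ℤ) (ω : Fin n → ℝ) :
    ipR (α + β) ω = ipR α ω + ipR β ω := by
  simp [ipR, add_mul, Finset.sum_add_distrib]

lemma ipR_zero (ω : Fin n → ℝ) : ipR (0 : Fin n → ℤ) ω = 0 := by simp [ipR]

lemma ipR_neg (α : Fin n → ℤ) (ω : Fin n → ℝ) : ipR α (-ω) = -ipR α ω := by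
  simp [ipR, Finset.sum_neg_distrib]

lemma initForm_apply (ω : Fin n → ℝ) (f : AddMonoidAlgebra k (Fin n → ℤ))
    (α : Fin n → ℤ) :
    (initForm ω f).coeff α = if (∀ β ∈ f.coeff.support, ipR α ω ≤ ipR β ω) then f.coeff α else 0 := by
  rw [initForm, AddMonoidAlgebra.coeff_ofCoeff, Finsupp.filter_apply]

lemma mem_support_initForm {ω : Fin n → ℝ} {f : AddMonoidAlgebra k (Fin n → ℤ)}
    {α : Fin n → ℤ} :
    α ∈ (initForm ω f).coeff.support ↔
      α ∈ f.coeff.support ∧ (∀ β ∈ f.coeff.support, ipR α ω ≤ ipR β ω) := by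
  rw [initForm, AddMonoidAlgebra.coeff_ofCoeff, Finsupp.support_filter, Finset.mem_filter]

lemma support_initForm_subset (ω : Fin n → ℝ) (f : AddMonoidAlgebra k (Fin n → ℤ)) :
    (initForm ω f).coeff.support ⊆ f.coeff.support :=
  fun _ h => (mem_support_initForm.mp h).1

lemma initForm_ne_zero {ω : Fin n → ℝ} {f : AddMonoidAlgebra k (Fin n → ℤ)}
    (hf : f ≠ 0) : initForm ω f ≠ 0 := by
  obtain ⟨α, hα, hmin⟩ := Finset.exists_min_image f.coeff.support (fun β => ipR β ω)
    (Finsupp.support_nonempty_iff.mpr (AddMonoidAlgebra.coeff_eq_zero.not.mpr hf))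
  rw [ne_eq, ← AddMonoidAlgebra.coeff_eq_zero, ← ne_eq, ← Finsupp.support_nonempty_iff]
  exact ⟨α, mem_support_initForm.mpr ⟨hα, hmin⟩⟩

lemma initForm_value_eq {ω : Fin n → ℝ} {f : AddMonoidAlgebra k (Fin n → ℤ)}
    {α β : Fin n → ℤ} (hα : α ∈ (initForm ω f).coeff.support)
    (hβ : β ∈ (initForm ω f).coeff.support) : ipR α ω = ipR β ω := by
  rcases mem_support_initForm.mp hα with ⟨hα1, hα2⟩
  rcases mem_support_initForm.mp hβ with ⟨hβ1, hβ2⟩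
  exact le_antisymm (hα2 β hβ1) (hβ2 α hα1)

lemma mul_apply_of_support_subset {f g : AddMonoidAlgebra k (Fin n → ℤ)}
    {S T : Finset (Fin n → ℤ)} (hS : f.coeff.support ⊆ S) (hT : g.coeff.support ⊆ T)
    (γ : Fin n → ℤ) :
    (f * g).coeff γ = ∑ a ∈ S, ∑ b ∈ T, if a + b = γ then f.coeff a * g.coeff b else 0 := by
  rw [AddMonoidAlgebra.coeff_mul, Finsupp.sum]
  rw [Finset.sum_subset hS (fun a _ ha => by
    simp [Finsupp.notMem_support_iff.mp ha, Finsupp.sum])]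
  refine Finset.sum_congr rfl fun a _ => ?_
  rw [Finsupp.sum]
  exact Finset.sum_subset hT (fun b _ hb => by
    simp [Finsupp.notMem_support_iff.mp hb])

lemma initForm_mul (ω : Fin n → ℝ) {f g : AddMonoidAlgebra k (Fin n → ℤ)}
    (hf : f ≠ 0) (hg : g ≠ 0) :
    initForm ω (f * g) = initForm ω f * initForm ω g := by
  obtain ⟨a₀, ha₀⟩ := Finsupp.support_nonempty_iff.mpr (AddMonoidAlgebra.coeff_eq_zero.not.mpr <| initForm_ne_zero (ω := ω) hf)
  obtain ⟨b₀, hb₀⟩ := Finsupp.support_nonempty_iff.mpr (AddMonoidAlgebra.coeff_eq_zero.not.mpr <| initForm_ne_zero (ω := ω) hg)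
  rcases mem_support_initForm.mp ha₀ with ⟨ha₀f, ha₀min⟩
  rcases mem_support_initForm.mp hb₀ with ⟨hb₀g, hb₀min⟩
  set m : ℝ := ipR a₀ ω + ipR b₀ ω with hm
  -- coefficients agree below level m
  have key : ∀ γ : Fin n → ℤ, ipR γ ω ≤ m →
      (f * g).coeff γ = (initForm ω f * initForm ω g).coeff γ := by
    intro γ hγ
    rw [mul_apply_of_support_subset (le_refl f.coeff.support) (le_refl g.coeff.support) γ,
      mul_apply_of_support_subset (support_initForm_subset ω f)
        (support_initForm_subset ω g) γ]
    refine Finset.sum_congr rfl fun a ha => Finset.sum_congr rfl fun b hb => ?_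
    by_cases hab : a + b = γ
    · rw [if_pos hab, if_pos hab]
      have hamin : ∀ β ∈ f.coeff.support, ipR a ω ≤ ipR β ω := by
        intro β hβ
        by_contra hcon
        push_neg at hcon
        have h1 : ipR a₀ ω ≤ ipR β ω := ha₀min β hβ
        have h2 : ipR b₀ ω ≤ ipR b ω := hb₀min b hb
        have h3 : ipR a ω + ipR b ω = ipR γ ω := by rw [← hab, ipR_add]
        linarith
      have hbmin : ∀ β ∈ g.coeff.support, ipR b ω ≤ ipR β ω := by
        intro β hβ
        by_contra hcon
        push_neg at hcon
        have h1 : ipR b₀ ω ≤ ipR β ω := hb₀min β hβ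
        have h2 : ipR a₀ ω ≤ ipR a ω := ha₀min a ha
        have h3 : ipR a ω + ipR b ω = ipR γ ω := by rw [← hab, ipR_add]
        linarith
      rw [initForm_apply, initForm_apply, if_pos hamin, if_pos hbmin]
    · rw [if_neg hab, if_neg hab]
  -- every element of the support of the product of initial forms sits at level m
  have hlevel : ∀ γ ∈ (initForm ω f * initForm ω g).coeff.support, ipR γ ω = m := by
    intro γ hγ
    obtain ⟨x, hx, y, hy, hxy⟩ := Finset.mem_add.mp
      (AddMonoidAlgebra.support_coeff_mul_subset (initForm ω f) (initForm ω g) hγ)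
    rw [← hxy, ipR_add, hm, initForm_value_eq hx ha₀, initForm_value_eq hy hb₀]
  -- every element of the support of f*g sits at level ≥ m
  have hge : ∀ γ ∈ (f * g).coeff.support, m ≤ ipR γ ω := by
    intro γ hγ
    obtain ⟨x, hx, y, hy, hxy⟩ := Finset.mem_add.mp
      (AddMonoidAlgebra.support_coeff_mul_subset f g hγ)
    rw [← hxy, ipR_add, hm]
    exact add_le_add (ha₀min x hx) (hb₀min y hy)
  have hPne : initForm ω f * initForm ω g ≠ 0 :=
    mul_ne_zero (initForm_ne_zero hf) (initForm_ne_zero hg)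
  ext γ
  rw [initForm_apply]
  rcases le_or_gt (ipR γ ω) m with hγ | hγ
  · rw [key γ hγ]
    by_cases hP : (initForm ω f * initForm ω g).coeff γ = 0
    · split_ifs <;> simp [hP]
    · have hmem : γ ∈ (initForm ω f * initForm ω g).coeff.support :=
        Finsupp.mem_support_iff.mpr hP
      have hc : ∀ β ∈ (f * g).coeff.support, ipR γ ω ≤ ipR β ω := by
        intro β hβ
        rw [hlevel γ hmem]
        exact hge β hβ
      rw [if_pos hc]
  · have hP0 : (initForm ω f * initForm ω g).coeff γ = 0 := by
      by_contra hP
      have := hlevel γ (Finsupp.mem_support_iff.mpr hP)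
      linarith
    obtain ⟨δ, hδ⟩ := Finsupp.support_nonempty_iff.mpr (AddMonoidAlgebra.coeff_eq_zero.not.mpr hPne)
    have hδm : ipR δ ω = m := hlevel δ hδ
    have hδfg : δ ∈ (f * g).coeff.support := by
      rw [Finsupp.mem_support_iff, key δ (le_of_eq hδm)]
      exact Finsupp.mem_support_iff.mp hδ
    have hc : ¬ ∀ β ∈ (f * g).coeff.support, ipR γ ω ≤ ipR β ω := by
      push_neg
      exact ⟨δ, hδfg, by rw [hδm]; exact hγ⟩
    rw [if_neg hc, hP0]

lemma initForm_one (ω : Fin n → ℝ) :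
    initForm ω (1 : AddMonoidAlgebra k (Fin n → ℤ)) = 1 := by
  have : ∀ β ∈ (1 : AddMonoidAlgebra k (Fin n → ℤ)).coeff.support, β = 0 := by
    intro β hβ
    rw [AddMonoidAlgebra.one_def, AddMonoidAlgebra.coeff_single] at hβ
    simpa using Finsupp.support_single_subset hβ
  ext γ
  rw [initForm_apply]
  by_cases hγ : γ ∈ (1 : AddMonoidAlgebra k (Fin n → ℤ)).coeff.support
  · have hγ0 := this γ hγ
    rw [if_pos]
    intro β hβ
    rw [hγ0, this β hβ]
  · rw [Finsupp.notMem_support_iff.mp hγ]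
    split_ifs <;> rfl

lemma initForm_prod (ω : Fin n → ℝ) {ι : Type*} (s : Finset ι)
    (F : ι → AddMonoidAlgebra k (Fin n → ℤ)) (hF : ∀ i ∈ s, F i ≠ 0) :
    initForm ω (∏ i ∈ s, F i) = ∏ i ∈ s, initForm ω (F i) := by
  induction s using Finset.cons_induction with
  | empty => simpa using initForm_one ω
  | cons a s ha ih =>
    rw [Finset.prod_cons, Finset.prod_cons,
      initForm_mul ω (hF a (Finset.mem_cons_self a s))
        (Finset.prod_ne_zero_iff.mpr fun i hi => hF i (Finset.mem_cons_of_mem hi)),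
      ih fun i hi => hF i (Finset.mem_cons_of_mem hi)]

lemma ipR_const_on_prod_support (ω : Fin n → ℝ) {ι : Type*} (s : Finset ι)
    (F : ι → AddMonoidAlgebra k (Fin n → ℤ)) (v : ι → ℝ)
    (hv : ∀ i ∈ s, ∀ α ∈ (F i).coeff.support, ipR α ω = v i) :
    ∀ γ ∈ (∏ i ∈ s, F i).coeff.support, ipR γ ω = ∑ i ∈ s, v i := by
  induction s using Finset.cons_induction with
  | empty =>
    intro γ hγ
    rw [Finset.prod_empty, AddMonoidAlgebra.one_def, AddMonoidAlgebra.coeff_single] at hγ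
    have := Finsupp.support_single_subset hγ
    simp only [Finset.mem_singleton] at this
    rw [this, ipR_zero, Finset.sum_empty]
  | cons a s ha ih =>
    intro γ hγ
    rw [Finset.prod_cons] at hγ
    obtain ⟨x, hx, y, hy, hxy⟩ := Finset.mem_add.mp
      (AddMonoidAlgebra.support_coeff_mul_subset _ _ hγ)
    rw [← hxy, ipR_add, Finset.sum_cons,
      hv a (Finset.mem_cons_self a s) x hx,
      ih (fun i hi => hv i (Finset.mem_cons_of_mem hi)) y hy]

lemma initForm_eq_of_support_eq {ω ω' : Fin n → ℝ}
    {f : AddMonoidAlgebra k (Fin n → ℤ)}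
    (h : (initForm ω f).coeff.support = (initForm ω' f).coeff.support) :
    initForm ω f = initForm ω' f := by
  ext γ
  by_cases hγ : γ ∈ (initForm ω f).coeff.support
  · have hγ' : γ ∈ (initForm ω' f).coeff.support := h ▸ hγ
    rw [initForm_apply, initForm_apply, if_pos (mem_support_initForm.mp hγ).2,
      if_pos (mem_support_initForm.mp hγ').2]
  · have hγ' : γ ∉ (initForm ω' f).coeff.support := h ▸ hγ
    rw [Finsupp.notMem_support_iff.mp hγ, Finsupp.notMem_support_iff.mp hγ']

lemma support_init_subset_of_init_prod_eq {r : ℕ}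
    {f : Fin r → AddMonoidAlgebra k (Fin n → ℤ)} (hf : ∀ i, f i ≠ 0)
    {ω ω' : Fin n → ℝ}
    (h : initForm ω (∏ i, f i) = initForm ω' (∏ i, f i)) (i : Fin r) :
    (initForm ω (f i)).coeff.support ⊆ (initForm ω' (f i)).coeff.support := by
  -- minimizers of ω' over supp (f j)
  have hb : ∀ j : Fin r, ∃ b, b ∈ (f j).coeff.support ∧
      ∀ β ∈ (f j).coeff.support, ipR b ω' ≤ ipR β ω' := by
    intro j
    obtain ⟨b, hb⟩ := Finsupp.support_nonempty_iff.mpr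
      (AddMonoidAlgebra.coeff_eq_zero.not.mpr <| initForm_ne_zero (ω := ω') (hf j))
    exact ⟨b, mem_support_initForm.mp hb⟩
  choose b hbmem hbmin using hb
  set mv : Fin r → ℝ := fun j => ipR (b j) ω' with hmv
  -- minimizers of ω' over supp (initForm ω (f j))
  have ha : ∀ j : Fin r, ∃ a, a ∈ (initForm ω' (initForm ω (f j))).coeff.support := by
    intro j
    obtain ⟨a, haa⟩ := Finsupp.support_nonempty_iff.mpr
      (AddMonoidAlgebra.coeff_eq_zero.not.mpr <| initForm_ne_zero (ω := ω') (initForm_ne_zero (ω := ω) (hf j)))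
    exact ⟨a, haa⟩
  choose a hamem using ha
  set vv : Fin r → ℝ := fun j => ipR (a j) ω' with hvv
  -- maximizers of ω' over supp (initForm ω (f j))
  have hM : ∀ j : Fin r, ∃ M, M ∈ (initForm (-ω') (initForm ω (f j))).coeff.support := by
    intro j
    obtain ⟨M, hMM⟩ := Finsupp.support_nonempty_iff.mpr
      (AddMonoidAlgebra.coeff_eq_zero.not.mpr <| initForm_ne_zero (ω := -ω') (initForm_ne_zero (ω := ω) (hf j)))
    exact ⟨M, hMM⟩
  choose M hMmem using hM
  set Vv : Fin r → ℝ := fun j => ipR (M j) ω' with hVv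
  have haA : ∀ j, a j ∈ (initForm ω (f j)).coeff.support :=
    fun j => support_initForm_subset _ _ (hamem j)
  have hMA : ∀ j, M j ∈ (initForm ω (f j)).coeff.support :=
    fun j => support_initForm_subset _ _ (hMmem j)
  have hMmax : ∀ j, ∀ β ∈ (initForm ω (f j)).coeff.support, ipR β ω' ≤ Vv j := by
    intro j β hβ
    have := (mem_support_initForm.mp (hMmem j)).2 β hβ
    rw [ipR_neg, ipR_neg] at this
    linarith [this]
  -- every element of supp (initForm ω' (∏ f)) has ω'-value ∑ mv
  have hsum_m : ∀ γ ∈ (initForm ω' (∏ j, f j)).coeff.support, ipR γ ω' = ∑ j, mv j := by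
    rw [initForm_prod ω' Finset.univ f (fun j _ => hf j)]
    exact ipR_const_on_prod_support ω' Finset.univ _ mv
      (fun j _ α hα => initForm_value_eq hα
        (mem_support_initForm.mpr ⟨hbmem j, hbmin j⟩))
  -- supports coincide thanks to h
  have hss : (initForm ω (∏ j, f j)).coeff.support = (initForm ω' (∏ j, f j)).coeff.support := by
    rw [h]
  -- the v-sum equals the m-sum
  have hvm : ∑ j, vv j = ∑ j, mv j := by
    have hQ : initForm ω' (initForm ω (∏ j, f j)) =
        ∏ j, initForm ω' (initForm ω (f j)) := by
      rw [initForm_prod ω Finset.univ f (fun j _ => hf j),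
        initForm_prod ω' Finset.univ _ (fun j _ => initForm_ne_zero (hf j))]
    obtain ⟨γ, hγ⟩ := Finsupp.support_nonempty_iff.mpr
      (AddMonoidAlgebra.coeff_eq_zero.not.mpr <| initForm_ne_zero (ω := ω') (initForm_ne_zero (ω := ω)
        (Finset.prod_ne_zero_iff.mpr fun j _ => hf j)))
    have h1 : ipR γ ω' = ∑ j, vv j := by
      rw [hQ] at hγ
      exact ipR_const_on_prod_support ω' Finset.univ _ vv
        (fun j _ α hα => initForm_value_eq hα (hamem j)) γ hγ
    have h2 : ipR γ ω' = ∑ j, mv j := by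
      refine hsum_m γ ?_
      rw [← hss]
      exact support_initForm_subset _ _ hγ
    rw [← h1, ← h2]
  -- the V-sum equals the m-sum
  have hVm : ∑ j, Vv j = ∑ j, mv j := by
    have hQ : initForm (-ω') (initForm ω (∏ j, f j)) =
        ∏ j, initForm (-ω') (initForm ω (f j)) := by
      rw [initForm_prod ω Finset.univ f (fun j _ => hf j),
        initForm_prod (-ω') Finset.univ _ (fun j _ => initForm_ne_zero (hf j))]
    obtain ⟨γ, hγ⟩ := Finsupp.support_nonempty_iff.mpr
      (AddMonoidAlgebra.coeff_eq_zero.not.mpr <| initForm_ne_zero (ω := -ω') (initForm_ne_zero (ω := ω)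
        (Finset.prod_ne_zero_iff.mpr fun j _ => hf j)))
    have h1 : ipR γ ω' = ∑ j, Vv j := by
      rw [hQ] at hγ
      refine ipR_const_on_prod_support ω' Finset.univ _ Vv
        (fun j _ α hα => ?_) γ hγ
      have := initForm_value_eq hα (hMmem j)
      rw [ipR_neg, ipR_neg] at this
      linarith [this]
    have h2 : ipR γ ω' = ∑ j, mv j := by
      refine hsum_m γ ?_
      rw [← hss]
      exact support_initForm_subset _ _ hγ
    rw [← h1, ← h2]
  have hle_v : ∀ j : Fin r, mv j ≤ vv j := fun j =>
    hbmin j (a j) (support_initForm_subset _ _ (haA j))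
  have hle_V : ∀ j : Fin r, mv j ≤ Vv j := fun j =>
    hbmin j (M j) (support_initForm_subset _ _ (hMA j))
  have hveq : ∀ j : Fin r, mv j = vv j :=
    fun j => (Finset.sum_eq_sum_iff_of_le (fun j _ => hle_v j)).mp
      (by rw [hvm]) j (Finset.mem_univ j)
  have hVeq : ∀ j : Fin r, mv j = Vv j :=
    fun j => (Finset.sum_eq_sum_iff_of_le (fun j _ => hle_V j)).mp
      (by rw [hVm]) j (Finset.mem_univ j)
  -- conclude
  intro α hα
  have hαf : α ∈ (f i).coeff.support := support_initForm_subset _ _ hα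
  have hup : ipR α ω' ≤ mv i := by rw [hVeq i]; exact hMmax i α hα
  have hdown : mv i ≤ ipR α ω' := hbmin i α hαf
  have hαval : ipR α ω' = mv i := le_antisymm hup hdown
  refine mem_support_initForm.mpr ⟨hαf, fun β hβ => ?_⟩
  rw [hαval]
  exact hbmin i β hβ

end Aux

/-- For nonzero Laurent polynomials `f₁, …, f_r` over a field and an arbitrary
subset `C₀ ⊆ ℝⁿ`, every `fᵢ` is `C₀`-balanced iff the product `f₁ ⋯ f_r` is
`C₀`-balanced. -/
theorem forall_balanced_iff_prod_balanced {k : Type*} [Field k] {n r : ℕ}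
    (C : Set (Fin n → ℝ))
    (f : Fin r → AddMonoidAlgebra k (Fin n → ℤ)) (hf : ∀ i, f i ≠ 0) :
    (∀ i, IsBalanced C (f i)) ↔ IsBalanced C (∏ i, f i) := by
  constructor
  · intro hbal ω hω ω' hω'
    rw [initForm_prod ω Finset.univ f (fun i _ => hf i),
      initForm_prod ω' Finset.univ f (fun i _ => hf i)]
    exact Finset.prod_congr rfl fun i _ => hbal i ω hω ω' hω'
  · intro hbal i ω hω ω' hω'
    apply initForm_eq_of_support_eq
    apply subset_antisymm
    · exact support_init_subset_of_init_prod_eq hf (hbal ω hω ω' hω') i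
    · exact support_init_subset_of_init_prod_eq hf (hbal ω' hω' ω hω) i
end
end

section
/- Let k be a field and f₁,…,f_r nonzero Laurent polynomials in n variables over k. Let N be the Newton polytope of f₁⋯f_r (equivalently, the Minkowski sum of the Newton polytopes of the fᵢ) and d = dim(N), the dimension of the affine span of N. For each i choose αᵢ ∈ supp(fᵢ). Then there exists a matrix A ∈ GLₙ(ℤ) such that for every i and every β ∈ supp(fᵢ), the vector (β − αᵢ)·A lies in ℤ^d × {0}^{n−d}; equivalently, the Laurent polynomial (X^{−αᵢ} fᵢ)^A involves only the first d variables, where GLₙ(ℤ) acts on Laurent polynomials by (X^α)^A := X^{αA}. -/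
noncomputable section

/-- Cast of an integer lattice vector to ℝⁿ. -/
def castR {n : ℕ} (β : Fin n → ℤ) : Fin n → ℝ := fun i => (β i : ℝ)

/-- Newton polytope of a Laurent polynomial: the convex hull of its support. -/
def newton {k : Type*} [CommRing k] {n : ℕ} (f : AddMonoidAlgebra k (Fin n → ℤ)) :
    Set (Fin n → ℝ) :=
  convexHull ℝ (castR '' (f.coeff.support : Set (Fin n → ℤ)))

namespace TorusFactors

lemma castR_add {n : ℕ} (a b : Fin n → ℤ) : castR (a + b) = castR a + castR b := by
  funext i; simp [castR]

lemma castR_sub {n : ℕ} (a b : Fin n → ℤ) : castR (a - b) = castR a - castR b := by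
  funext i; simp [castR]

/-- `castR` as a `ℤ`-linear map. -/
def castL (n : ℕ) : (Fin n → ℤ) →ₗ[ℤ] (Fin n → ℝ) where
  toFun := castR
  map_add' := castR_add
  map_smul' := by
    intro m x; funext i
    simp [castR]

section MaxLemmas

variable {k : Type*} [Field k] {n : ℕ} {C : Type*} [AddCommMonoid C] [LinearOrder C] [IsOrderedCancelAddMonoid C]

/-- The product of two Laurent polynomials has the sum of the maxima (w.r.t. an injective
additive degree function) in its support, and this is the maximum there. -/
lemma mul_max {p q : AddMonoidAlgebra k (Fin n → ℤ)}
    {D : (Fin n → ℤ) → C} (hD : Function.Injective D)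
    (hadd : ∀ a b, D (a + b) = D a + D b)
    {a b : Fin n → ℤ}
    (ha : a ∈ p.coeff.support) (hamax : ∀ x ∈ p.coeff.support, D x ≤ D a)
    (hb : b ∈ q.coeff.support) (hbmax : ∀ x ∈ q.coeff.support, D x ≤ D b) :
    (a + b) ∈ (p * q).coeff.support ∧ ∀ c ∈ (p * q).coeff.support, D c ≤ D (a + b) := by
  classical
  constructor
  · have hval : (p * q).coeff (a + b) = p.coeff a * q.coeff b := by
      rw [AddMonoidAlgebra.mul_apply, Finsupp.sum, Finset.sum_eq_single a]
      · rw [Finsupp.sum, Finset.sum_eq_single b]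
        · rw [if_pos rfl]
        · intro x hx hxb
          rw [if_neg]
          intro h
          exact hxb (add_left_cancel h)
        · intro h; exact absurd hb h
      · intro x hx hxa
        rw [Finsupp.sum]
        apply Finset.sum_eq_zero
        intro y hy
        rw [if_neg]
        intro h
        have h1 : D x < D a := lt_of_le_of_ne (hamax x hx) fun e => hxa (hD e)
        have h2 : D y ≤ D b := hbmax y hy
        have hlt : D (x + y) < D (a + b) := by
          rw [hadd, hadd]; exact add_lt_add_of_lt_of_le h1 h2
        exact absurd (congrArg D h) hlt.ne
      · intro h; exact absurd ha h
    rw [Finsupp.mem_support_iff] at ha hb ⊢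
    rw [hval]
    exact mul_ne_zero ha hb
  · intro c hc
    have hmem := AddMonoidAlgebra.support_coeff_mul_subset p q hc
    rw [Finset.mem_add] at hmem
    obtain ⟨x, hx, y, hy, rfl⟩ := hmem
    rw [hadd, hadd]
    exact add_le_add (hamax x hx) (hbmax y hy)

/-- Iterated version for finite products. -/
lemma prod_max {ι : Type*} {D : (Fin n → ℤ) → C} (hD : Function.Injective D)
    (hadd : ∀ a b, D (a + b) = D a + D b)
    (s : Finset ι) (f : ι → AddMonoidAlgebra k (Fin n → ℤ)) (g : ι → Fin n → ℤ)
    (hg : ∀ i ∈ s, g i ∈ (f i).coeff.support)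
    (hgmax : ∀ i ∈ s, ∀ x ∈ (f i).coeff.support, D x ≤ D (g i)) :
    (∑ i ∈ s, g i) ∈ (∏ i ∈ s, f i).coeff.support ∧
      ∀ c ∈ (∏ i ∈ s, f i).coeff.support, D c ≤ D (∑ i ∈ s, g i) := by
  classical
  induction s using Finset.cons_induction with
  | empty =>
      have hs : (1 : AddMonoidAlgebra k (Fin n → ℤ)).coeff.support = {0} := by
        rw [AddMonoidAlgebra.one_def]
        exact Finsupp.support_single_ne_zero _ one_ne_zero
      constructor
      · simp [hs]
      · intro c hc
        simp only [Finset.prod_empty, hs, Finset.mem_singleton] at hc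
        simp [hc]
  | cons i s his ih =>
      rw [Finset.prod_cons, Finset.sum_cons]
      have hih := ih (fun j hj => hg j (Finset.mem_cons_of_mem hj))
        (fun j hj => hgmax j (Finset.mem_cons_of_mem hj))
      exact mul_max hD hadd (hg i (Finset.mem_cons_self i s))
        (hgmax i (Finset.mem_cons_self i s)) hih.1 hih.2

end MaxLemmas

/-- `ℤ`-linearly independent integer vectors remain independent over `ℝ` (via Gram matrices). -/
lemma linearIndependent_castR {n m : ℕ} {w : Fin m → (Fin n → ℤ)}
    (hw : LinearIndependent ℤ w) : LinearIndependent ℝ (fun j => castR (w j)) := by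
  classical
  by_contra hdep
  rw [Fintype.not_linearIndependent_iff] at hdep
  obtain ⟨c, hsum, j₀, hj₀⟩ := hdep
  set G : Matrix (Fin m) (Fin m) ℤ := Matrix.of (fun a b => ∑ i, w a i * w b i) with hG
  have hline : ∀ i, (∑ j, c j * (w j i : ℝ)) = 0 := by
    intro i
    have := congrFun hsum i
    simpa [castR] using this
  have hGR : (G.map (Int.cast : ℤ → ℝ)).mulVec c = 0 := by
    funext l
    have : ∑ j, (∑ i, (w l i : ℝ) * (w j i : ℝ)) * c j = 0 := by
      calc ∑ j, (∑ i, (w l i : ℝ) * (w j i : ℝ)) * c j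
          = ∑ j, ∑ i, (w l i : ℝ) * ((c j) * (w j i : ℝ)) := by
            apply Finset.sum_congr rfl; intro j _
            rw [Finset.sum_mul]
            apply Finset.sum_congr rfl; intro i _; ring
        _ = ∑ i, (w l i : ℝ) * (∑ j, (c j) * (w j i : ℝ)) := by
            rw [Finset.sum_comm]
            apply Finset.sum_congr rfl; intro i _
            rw [Finset.mul_sum]
        _ = 0 := by
            apply Finset.sum_eq_zero; intro i _
            rw [hline i, mul_zero]
    simpa [Matrix.mulVec, dotProduct, hG] using this
  have hcne : c ≠ 0 := fun h => hj₀ (by rw [h]; rfl)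
  have hdetR : (G.map (Int.cast : ℤ → ℝ)).det = 0 :=
    Matrix.exists_mulVec_eq_zero_iff.mp ⟨c, hcne, hGR⟩
  have hdet : G.det = 0 := by
    have hcast : ((G.det : ℤ) : ℝ) = (G.map (Int.cast : ℤ → ℝ)).det :=
      RingHom.map_det (Int.castRingHom ℝ) G
    have : ((G.det : ℤ) : ℝ) = 0 := by rw [hcast]; exact hdetR
    exact_mod_cast this
  obtain ⟨c', hc'ne, hGc'⟩ := Matrix.exists_mulVec_eq_zero_iff.mpr hdet
  have hkey : ∀ i, (∑ j, c' j * w j i) = 0 := by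
    have h0 : (∑ i, (∑ j, c' j * w j i) * (∑ j, c' j * w j i)) = 0 := by
      calc (∑ i, (∑ j, c' j * w j i) * (∑ j, c' j * w j i))
          = ∑ i, ∑ l, (c' l * w l i) * (∑ j, c' j * w j i) := by
            apply Finset.sum_congr rfl; intro i _
            rw [Finset.sum_mul]
        _ = ∑ l, c' l * (∑ i, w l i * (∑ j, c' j * w j i)) := by
            rw [Finset.sum_comm]
            apply Finset.sum_congr rfl; intro l _
            rw [Finset.mul_sum]
            apply Finset.sum_congr rfl; intro i _; ring
        _ = ∑ l, c' l * (∑ j, (∑ i, w l i * w j i) * c' j) := by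
            apply Finset.sum_congr rfl; intro l _
            congr 1
            calc (∑ i, w l i * (∑ j, c' j * w j i))
                = ∑ i, ∑ j, (w l i * w j i) * c' j := by
                  apply Finset.sum_congr rfl; intro i _
                  rw [Finset.mul_sum]
                  apply Finset.sum_congr rfl; intro j _; ring
              _ = ∑ j, (∑ i, w l i * w j i) * c' j := by
                  rw [Finset.sum_comm]
                  apply Finset.sum_congr rfl; intro j _
                  rw [Finset.sum_mul]
        _ = 0 := by
            apply Finset.sum_eq_zero; intro l _
            have : (G.mulVec c') l = 0 := by rw [hGc']; rfl
            simpa [Matrix.mulVec, dotProduct, hG] using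
              (by rw [this, mul_zero] :
                c' l * (G.mulVec c') l = 0)
    intro i
    have := (Finset.sum_eq_zero_iff_of_nonneg
      (fun i _ => mul_self_nonneg (∑ j, c' j * w j i))).mp h0 i (Finset.mem_univ i)
    exact mul_self_eq_zero.mp this
  have : ∀ j, c' j = 0 := by
    apply Fintype.linearIndependent_iff.mp hw
    funext i
    simpa [Finset.sum_apply] using hkey i
  exact hc'ne (funext this)

section Geometry

variable {k : Type*} [Field k] {n : ℕ}

/-- Differences of support elements of a factor lie in the vector span of the support of the
product. -/
lemma sub_mem_vectorSpan {r : ℕ} (f : Fin r → AddMonoidAlgebra k (Fin n → ℤ))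
    (hf : ∀ i, f i ≠ 0) (i₀ : Fin r) {β₀ α₀ : Fin n → ℤ}
    (hβ₀ : β₀ ∈ (f i₀).coeff.support) (hα₀ : α₀ ∈ (f i₀).coeff.support) :
    castR β₀ - castR α₀ ∈
      vectorSpan ℝ (castR '' (((∏ i, f i).coeff.support : Finset (Fin n → ℤ)) :
        Set (Fin n → ℤ))) := by
  classical
  haveI : WellFoundedLT (Fin n) := inferInstance
  by_contra hx
  set W := vectorSpan ℝ (castR '' (((∏ i, f i).coeff.support : Finset (Fin n → ℤ)) :
    Set (Fin n → ℤ))) with hWdef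
  obtain ⟨φ, hφx, hφW⟩ := Submodule.exists_dual_map_eq_bot_of_notMem hx inferInstance
  have hφ0 : ∀ y ∈ W, φ y = 0 := by
    intro y hy
    have : φ y ∈ W.map φ := Submodule.mem_map_of_mem hy
    rw [hφW] at this
    simpa using this
  -- degree functions
  let Dp : (Fin n → ℤ) → ℝ ×ₗ Lex (Fin n → ℤ) := fun a => toLex (φ (castR a), toLex a)
  let Dm : (Fin n → ℤ) → ℝ ×ₗ Lex (Fin n → ℤ) := fun a => toLex (-φ (castR a), toLex a)
  have hDp_inj : Function.Injective Dp := by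
    intro a b h
    have := congrArg (fun x => (ofLex x).2) h
    exact congrArg ofLex this
  have hDm_inj : Function.Injective Dm := by
    intro a b h
    have := congrArg (fun x => (ofLex x).2) h
    exact congrArg ofLex this
  have hDp_add : ∀ a b, Dp (a + b) = Dp a + Dp b := by
    intro a b
    show toLex _ = toLex _
    rw [castR_add, map_add]
    rfl
  have hDm_add : ∀ a b, Dm (a + b) = Dm a + Dm b := by
    intro a b
    show toLex _ = toLex _
    rw [castR_add, map_add]
    have : -(φ (castR a) + φ (castR b)) = -φ (castR a) + -φ (castR b) := by ring
    rw [this]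
    rfl
  have hfst : ∀ (D : (Fin n → ℤ) → ℝ ×ₗ Lex (Fin n → ℤ)) (ψ : (Fin n → ℝ) → ℝ),
      (∀ a, D a = toLex (ψ (castR a), toLex a)) →
      ∀ x y, D x ≤ D y → ψ (castR x) ≤ ψ (castR y) := by
    intro D ψ hDdef x y h
    rw [hDdef, hDdef] at h
    rcases Prod.Lex.le_iff.mp h with h' | h'
    · exact le_of_lt h'
    · exact le_of_eq h'.1
  -- max selectors
  have hmaxsel : ∀ (D : (Fin n → ℤ) → ℝ ×ₗ Lex (Fin n → ℤ)),
      ∃ g : Fin r → (Fin n → ℤ), ∀ i, g i ∈ (f i).coeff.support ∧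
        ∀ x ∈ (f i).coeff.support, D x ≤ D (g i) := by
    intro D
    have : ∀ i : Fin r, ∃ a, a ∈ (f i).coeff.support ∧ ∀ x ∈ (f i).coeff.support, D x ≤ D a := by
      intro i
      obtain ⟨a, ha, hmax⟩ := Finset.exists_max_image ((f i).coeff.support) D
        (Finsupp.support_nonempty_iff.mpr (AddMonoidAlgebra.coeff_eq_zero.not.mpr (hf i)))
      exact ⟨a, ha, hmax⟩
    choose g hg using this
    exact ⟨g, hg⟩
  obtain ⟨g, hgsel⟩ := hmaxsel Dp
  obtain ⟨h, hhsel⟩ := hmaxsel Dm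
  have hgmem := prod_max hDp_inj hDp_add Finset.univ f g
    (fun i _ => (hgsel i).1) (fun i _ => (hgsel i).2)
  have hhmem := prod_max hDm_inj hDm_add Finset.univ f h
    (fun i _ => (hhsel i).1) (fun i _ => (hhsel i).2)
  -- Both total sums are in the support of the product, so φ agrees on them.
  have hsum_eq : φ (castR (∑ i, g i)) = φ (castR (∑ i, h i)) := by
    have hm1 : castR (∑ i, g i) ∈ castR '' (((∏ i, f i).coeff.support : Finset (Fin n → ℤ)) :
        Set (Fin n → ℤ)) := ⟨_, hgmem.1, rfl⟩
    have hm2 : castR (∑ i, h i) ∈ castR '' (((∏ i, f i).coeff.support : Finset (Fin n → ℤ)) :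
        Set (Fin n → ℤ)) := ⟨_, hhmem.1, rfl⟩
    have hmemW : castR (∑ i, g i) - castR (∑ i, h i) ∈ W := by
      simpa [vsub_eq_sub] using vsub_mem_vectorSpan ℝ hm1 hm2
    have := hφ0 _ hmemW
    rw [map_sub] at this
    linarith
  have hcast_sum : ∀ u : Fin r → (Fin n → ℤ), castR (∑ i, u i) = ∑ i, castR (u i) := by
    intro u
    exact map_sum (castL n) u Finset.univ
  have hsum_eq' : (∑ i, φ (castR (g i))) = ∑ i, φ (castR (h i)) := by
    have h1 := hsum_eq
    rw [hcast_sum, hcast_sum, map_sum, map_sum] at h1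
    exact h1
  have hle : ∀ i ∈ Finset.univ, φ (castR (h i)) ≤ φ (castR (g i)) := by
    intro i _
    have h1 : φ (castR (h i)) ≤ φ (castR (g i)) := by
      have := (hgsel i).2 (h i) (hhsel i).1
      exact hfst Dp (fun x => φ x) (fun a => rfl) _ _ this
    exact h1
  have heq : ∀ i ∈ Finset.univ, φ (castR (h i)) = φ (castR (g i)) :=
    (Finset.sum_eq_sum_iff_of_le hle).mp hsum_eq'.symm
  -- sandwich at i₀
  have hub : ∀ x ∈ (f i₀).coeff.support, φ (castR x) = φ (castR (g i₀)) := by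
    intro x hxm
    have h1 : φ (castR x) ≤ φ (castR (g i₀)) :=
      hfst Dp (fun x => φ x) (fun a => rfl) _ _ ((hgsel i₀).2 x hxm)
    have h2 : -φ (castR x) ≤ -φ (castR (h i₀)) :=
      hfst Dm (fun x => -φ x) (fun a => rfl) _ _ ((hhsel i₀).2 x hxm)
    have h3 := heq i₀ (Finset.mem_univ i₀)
    linarith
  have hfinal : φ (castR β₀ - castR α₀) = 0 := by
    rw [map_sub, hub β₀ hβ₀, hub α₀ hα₀]
    ring
  exact hφx hfinal

end Geometry

end TorusFactors

open TorusFactors in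
/-- Lemma 5.? (torus factors). -/
theorem exists_glnZ_support_in_first_d_coords {k : Type*} [Field k] {n r : ℕ}
    (f : Fin r → AddMonoidAlgebra k (Fin n → ℤ)) (hf : ∀ i, f i ≠ 0)
    (α : Fin r → (Fin n → ℤ)) (hα : ∀ i, α i ∈ (f i).coeff.support)
    (d : ℕ)
    (hd : d = Module.finrank ℝ (affineSpan ℝ (newton (∏ i, f i))).direction) :
    ∃ A : Matrix (Fin n) (Fin n) ℤ, IsUnit A ∧
      ∀ i, ∀ β ∈ (f i).coeff.support, ∀ j : Fin n, d ≤ (j : ℕ) →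
        Matrix.vecMul (β - α i) A j = 0 := by
  classical
  set W := vectorSpan ℝ (castR '' (((∏ i, f i).coeff.support : Finset (Fin n → ℤ)) :
    Set (Fin n → ℤ))) with hWdef
  have hdir : (affineSpan ℝ (newton (∏ i, f i))).direction = W := by
    rw [newton, affineSpan_convexHull, direction_affineSpan]
  have hdW : d = Module.finrank ℝ W := by rw [hd, hdir]
  have hsub : ∀ i, ∀ β ∈ (f i).coeff.support, castR β - castR (α i) ∈ W := by
    intro i β hβ
    exact sub_mem_vectorSpan f hf i hβ (hα i)
  -- the lattice of differences
  set T : Set (Fin n → ℤ) := {v | ∃ i, ∃ β ∈ (f i).coeff.support, v = β - α i} with hTdef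
  set L : Submodule ℤ (Fin n → ℤ) := Submodule.span ℤ T with hLdef
  have hLW : ∀ v ∈ L, castR v ∈ W := by
    intro v hv
    have hle : L ≤ (W.restrictScalars ℤ).comap (castL n) := by
      rw [hLdef, Submodule.span_le]
      rintro v ⟨i, β, hβ, rfl⟩
      show castL n (β - α i) ∈ W
      rw [map_sub]
      exact hsub i β hβ
    exact hle hv
  obtain ⟨m, snf⟩ := L.smithNormalForm (Pi.basisFun ℤ (Fin n))
  obtain ⟨bM, bN, emb, aD, hsnf⟩ := snf
  -- m ≤ d
  have hmd : m ≤ d := by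
    have hwli : LinearIndependent ℤ (fun j : Fin m => ((bN j : L) : Fin n → ℤ)) :=
      bN.linearIndependent.map' L.subtype (Submodule.ker_subtype L)
    have hRli := linearIndependent_castR hwli
    have hmemW : ∀ j : Fin m, castR ((bN j : L) : Fin n → ℤ) ∈ W :=
      fun j => hLW _ (bN j).2
    let v : Fin m → W := fun j => ⟨castR ((bN j : L) : Fin n → ℤ), hmemW j⟩
    have hvli : LinearIndependent ℝ v := by
      apply LinearIndependent.of_comp W.subtype
      exact hRli
    have := hvli.fintype_card_le_finrank
    simpa [hdW] using this
  -- coordinates of lattice elements vanish outside the range of emb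
  have hrepr : ∀ v ∈ L, ∀ j : Fin n, j ∉ Set.range emb → bM.repr v j = 0 := by
    intro v hv j hj
    set x : L := ⟨v, hv⟩ with hxdef
    have hvsum : v = ∑ t : Fin m, (bN.repr x t * aD t) • bM (emb t) := by
      have h1 : (x : Fin n → ℤ) = ∑ t : Fin m, bN.repr x t • ((bN t : L) : Fin n → ℤ) := by
        have := bN.sum_repr x
        calc (x : Fin n → ℤ) = ((∑ t : Fin m, bN.repr x t • bN t : L) : Fin n → ℤ) := by
              rw [this]
          _ = ∑ t : Fin m, bN.repr x t • ((bN t : L) : Fin n → ℤ) := by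
              push_cast
              rfl
      calc v = (x : Fin n → ℤ) := rfl
        _ = ∑ t : Fin m, bN.repr x t • ((bN t : L) : Fin n → ℤ) := h1
        _ = ∑ t : Fin m, (bN.repr x t * aD t) • bM (emb t) := by
            apply Finset.sum_congr rfl
            intro t _
            rw [hsnf t, smul_smul]
    rw [hvsum, map_sum]
    rw [Finsupp.finset_sum_apply]
    apply Finset.sum_eq_zero
    intro t _
    rw [map_smul, Finsupp.smul_apply, Module.Basis.repr_self]
    rw [Finsupp.single_apply_eq_zero.mpr, smul_zero]
    intro hje
    exact absurd ⟨t, hje.symm⟩ hj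
  -- permutation moving the range of emb into the first m coordinates
  have hper : ∃ e : Fin n ≃ Fin n, ∀ t : Fin m, ((e (emb t) : Fin n) : ℕ) < m := by
    have : ∀ j, Decidable (j ∈ Set.range emb) := fun j => Classical.dec _
    let eqA : {j : Fin n // j ∈ Set.range ⇑emb} ≃ Fin m :=
      (Equiv.ofInjective (⇑emb) emb.injective).symm
    let c := Fintype.card {j : Fin n // j ∉ Set.range ⇑emb}
    let e2 : {j : Fin n // j ∉ Set.range ⇑emb} ≃ Fin c := Fintype.equivFin _
    have hmc : m + c = n := by
      have h1 := Fintype.card_congr (Equiv.sumCompl (fun j : Fin n => j ∈ Set.range ⇑emb))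
      rw [Fintype.card_sum, Fintype.card_fin] at h1
      have h2 : Fintype.card {j : Fin n // j ∈ Set.range ⇑emb} = m := by
        rw [Fintype.card_congr eqA, Fintype.card_fin]
      rw [h2] at h1
      exact h1
    refine ⟨(Equiv.sumCompl (fun j : Fin n => j ∈ Set.range ⇑emb)).symm.trans
      ((eqA.sumCongr e2).trans ((finSumFinEquiv).trans (finCongr hmc))), ?_⟩
    intro t
    have h1 : (Equiv.sumCompl (fun j : Fin n => j ∈ Set.range ⇑emb)).symm (emb t) =
        Sum.inl ⟨emb t, ⟨t, rfl⟩⟩ :=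
      Equiv.sumCompl_symm_apply_of_pos (p := fun j : Fin n => j ∈ Set.range ⇑emb) (a := emb t) ⟨t, rfl⟩
    simp only [Equiv.trans_apply, h1, Equiv.sumCongr_apply, Sum.map_inl]
    have h2 : eqA ⟨emb t, ⟨t, rfl⟩⟩ = t := by
      apply (Equiv.ofInjective (⇑emb) emb.injective).injective
      simp [eqA]
    rw [h2]
    have h3 : ((finCongr hmc) ((finSumFinEquiv) (Sum.inl t)) : ℕ) = (t : ℕ) := by
      simp
    rw [h3]
    exact t.isLt
  obtain ⟨e, he⟩ := hper
  set b' : Module.Basis (Fin n) ℤ (Fin n → ℤ) := bM.reindex e with hb'def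
  have hrepr' : ∀ v ∈ L, ∀ j : Fin n, d ≤ (j : ℕ) → b'.repr v j = 0 := by
    intro v hv j hj
    rw [hb'def, Module.Basis.repr_reindex_apply]
    apply hrepr v hv
    rintro ⟨t, ht⟩
    have : j = e (emb t) := by rw [ht]; simp
    have := he t
    omega
  -- the matrix
  set b₀ : Module.Basis (Fin n) ℤ (Fin n → ℤ) := Pi.basisFun ℤ (Fin n) with hb₀def
  set A : Matrix (Fin n) (Fin n) ℤ := Matrix.of (fun i j => b'.repr (b₀ i) j) with hAdef
  have hvecMul : ∀ v : Fin n → ℤ, ∀ j : Fin n, Matrix.vecMul v A j = b'.repr v j := by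
    intro v j
    have hv : v = ∑ i, v i • b₀ i := by
      have := b₀.sum_repr v
      conv_lhs => rw [← this]
      apply Finset.sum_congr rfl
      intro i _
      rw [hb₀def, Pi.basisFun_repr]
    calc Matrix.vecMul v A j = ∑ i, v i * b'.repr (b₀ i) j := by
          simp [Matrix.vecMul, dotProduct, hAdef]
      _ = b'.repr v j := by
          conv_rhs => rw [hv]
          rw [map_sum, Finsupp.finset_sum_apply]
          apply Finset.sum_congr rfl
          intro i _
          rw [map_smul, Finsupp.smul_apply, smul_eq_mul]
  have hAunit : IsUnit A := by
    have hAeq : A = Matrix.transpose (b'.toMatrix ⇑b₀) := by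
      ext i j
      rw [hAdef]
      simp [Module.Basis.toMatrix_apply]
    rw [hAeq, Matrix.isUnit_iff_isUnit_det, Matrix.det_transpose]
    apply IsUnit.of_mul_eq_one (b₀.toMatrix ⇑b').det
    rw [← Matrix.det_mul, Module.Basis.toMatrix_mul_toMatrix_flip, Matrix.det_one]
  refine ⟨A, hAunit, ?_⟩
  intro i β hβ j hj
  rw [hvecMul]
  apply hrepr' _ _ j hj
  exact Submodule.subset_span ⟨i, β, hβ, rfl⟩
end
end

section
/- Let K be a field with a surjective discrete valuation ν and valuation ring O, and let C₀ ⊆ ℝⁿ be a rational half-open cone with dual cone C₀* = {α : ⟨α,ω⟩ ≥ 0 for all ω ∈ C₀}. Let u = c X^γ be a term with ν(c) = 0 and ⟨γ,ω⟩ = 0 for all ω ∈ C₀, and let v be a Laurent polynomial over K with all coefficients in O and supp(v) ⊆ C₀*. Then for arbitrary Laurent polynomials f₁, f₂ over K and every x ∈ (Kˣ)ⁿ with ν(x) ∈ C₀ ∩ ℤⁿ, one has min( ν((u·f₁ + v·f₂)(x)), ν(f₂(x)) ) = min( ν(f₁(x)), ν(f₂(x)) ) in ℤ ∪ {∞}.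 -/
noncomputable section

/-- A rational half-open cone in ℝⁿ. -/
def IsRatHalfOpenCone {n : ℕ} (C : Set (Fin n → ℝ)) : Prop :=
  ∃ (d e : ℕ) (φ : Fin d → (Fin n → ℤ)) (χ : Fin e → (Fin n → ℤ)),
    C = {ω | (∀ i, 0 ≤ ipR (φ i) ω) ∧ (∀ j, 0 < ipR (χ j) ω)}

/-- Evaluation of a Laurent polynomial at a point of the torus `(Kˣ)ⁿ`. -/
def evalL {K : Type*} [Field K] {n : ℕ} (f : AddMonoidAlgebra K (Fin n → ℤ))
    (x : Fin n → Kˣ) : K :=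
  ∑ α ∈ f.coeff.support, f.coeff α * ∏ i, ((x i ^ (α i) : Kˣ) : K)

section Aux

variable {K : Type*} [Field K] {n : ℕ}

/-- The monoid hom from exponents to `K` given by evaluation at `x`. -/
def evalHom (x : Fin n → Kˣ) : Multiplicative (Fin n → ℤ) →* K where
  toFun α := ∏ i, ((x i ^ (Multiplicative.toAdd α i) : Kˣ) : K)
  map_one' := by simp
  map_mul' a b := by
    show (∏ i, ((x i ^ (Multiplicative.toAdd (a * b) i) : Kˣ) : K))
        = (∏ i, ((x i ^ (Multiplicative.toAdd a i) : Kˣ) : K))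
          * (∏ i, ((x i ^ (Multiplicative.toAdd b i) : Kˣ) : K))
    rw [← Finset.prod_mul_distrib]
    refine Finset.prod_congr rfl fun i _ => ?_
    have : Multiplicative.toAdd (a * b) i = Multiplicative.toAdd a i + Multiplicative.toAdd b i := rfl
    rw [this, zpow_add]
    push_cast
    ring

lemma evalL_eq (f : AddMonoidAlgebra K (Fin n → ℤ)) (x : Fin n → Kˣ) :
    evalL f x = AddMonoidAlgebra.lift K K (Fin n → ℤ) (evalHom x) f := by
  rw [AddMonoidAlgebra.lift_apply]
  unfold evalL
  rw [Finsupp.sum]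
  refine Finset.sum_congr rfl fun α _ => ?_
  simp [evalHom, smul_eq_mul]

lemma val_zpow (v : AddValuation K (WithTop ℤ)) (y : Kˣ) (k : ℤ)
    (hy : v (y : K) = (k : WithTop ℤ)) (m : ℤ) :
    v ((y ^ m : Kˣ) : K) = ((m * k : ℤ) : WithTop ℤ) := by
  induction m using Int.induction_on with
  | zero => simpa using v.map_one
  | succ m ih =>
    have : ((y ^ ((m : ℤ) + 1) : Kˣ) : K) = ((y ^ (m : ℤ) : Kˣ) : K) * (y : K) := by
      rw [zpow_add, zpow_one]; push_cast; ring
    rw [this, v.map_mul, ih, hy]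
    rw [← WithTop.coe_add]
    congr 1
    ring
  | pred m ih =>
    have key : ((y ^ (-(m : ℤ) - 1) : Kˣ) : K) * (y : K) = ((y ^ (-(m : ℤ)) : Kˣ) : K) := by
      have h1 : y ^ (-(m : ℤ) - 1) * y = y ^ (-(m : ℤ)) := by
        rw [← zpow_add_one]; norm_num
      rw [← h1]; push_cast; ring
    set M : ℤ := -(m : ℤ) * k with hM
    have h2 : v ((y ^ (-(m : ℤ) - 1) : Kˣ) : K) + (k : WithTop ℤ) = (M : WithTop ℤ) := by
      rw [← hy, ← v.map_mul, key, ih]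
    rcases eq_or_ne (v ((y ^ (-(m : ℤ) - 1) : Kˣ) : K)) ⊤ with ht | ht
    · rw [ht, top_add] at h2
      exact absurd h2.symm WithTop.coe_ne_top
    · lift (v ((y ^ (-(m : ℤ) - 1) : Kˣ) : K)) to ℤ using ht with j hj
      rw [← WithTop.coe_add] at h2
      have h4 : j + k = -(m : ℤ) * k := by exact_mod_cast h2
      have h3 : j = (-(m : ℤ) - 1) * k := by ring_nf; ring_nf at h4; linarith
      exact_mod_cast congrArg (fun z : ℤ => (z : WithTop ℤ)) h3

lemma val_prod (v : AddValuation K (WithTop ℤ)) (x : Fin n → Kˣ) (ω : Fin n → ℤ)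
    (hx : ∀ i, v ((x i : K)) = (ω i : WithTop ℤ)) (α : Fin n → ℤ) :
    v (∏ i, ((x i ^ (α i) : Kˣ) : K)) = ((∑ i, α i * ω i : ℤ) : WithTop ℤ) := by
  classical
  have H : ∀ s : Finset (Fin n),
      v (∏ i ∈ s, ((x i ^ (α i) : Kˣ) : K)) = ((∑ i ∈ s, α i * ω i : ℤ) : WithTop ℤ) := by
    intro s
    induction s using Finset.induction_on with
    | empty => simpa using v.map_one
    | insert a s hi ih =>
      rw [Finset.prod_insert hi, Finset.sum_insert hi, v.map_mul, ih,
        val_zpow v (x a) (ω a) (hx a) (α a), ← WithTop.coe_add]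
  exact H Finset.univ

lemma addval_neg (v : AddValuation K (WithTop ℤ)) (b : K) : v (-b) = v b := by
  have h1 : v ((-1 : K) * (-1 : K)) = v (-1 : K) + v (-1 : K) := v.map_mul _ _
  rw [show ((-1 : K) * (-1 : K)) = 1 by ring, v.map_one] at h1
  have hv1 : v (-1 : K) = 0 := by
    rcases eq_or_ne (v (-1 : K)) ⊤ with ht | ht
    · rw [ht] at h1; simp at h1
    · lift (v (-1 : K)) to ℤ using ht with j hj
      rw [← WithTop.coe_add] at h1
      have : j + j = 0 := by exact_mod_cast h1.symm
      have : j = 0 := by omega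
      simp [this]
  rw [show -b = (-1 : K) * b by ring, v.map_mul, hv1, zero_add]

lemma addval_add_eq_left (v : AddValuation K (WithTop ℤ)) {a b : K} (h : v a < v b) :
    v (a + b) = v a := by
  refine le_antisymm ?_ ?_
  · have h2 : v a = v ((a + b) + (-b)) := by ring_nf
    have h3 : min (v (a + b)) (v (-b)) ≤ v a := h2 ▸ v.map_add _ _
    rw [addval_neg] at h3
    rcases min_le_iff.mp h3 with h4 | h4
    · exact h4
    · exact absurd h4 (not_le.mpr h)
  · have := v.map_add a b
    rwa [min_eq_left h.le] at this

end Aux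

/-- Lemma 6.3(S2): for a unit term `u = c X^γ` (with `ν(c) = 0` and `⟨γ,·⟩ ≡ 0`
on `C₀`) and a Laurent polynomial `w` with coefficients in the valuation ring
and support in the dual cone `C₀*`, and arbitrary Laurent polynomials `f₁, f₂`,
one has `min(ν((u·f₁ + w·f₂)(x)), ν(f₂(x))) = min(ν(f₁(x)), ν(f₂(x)))` for all
`x ∈ (Kˣ)ⁿ` with `ν(x) ∈ C₀ ∩ ℤⁿ`. -/
theorem valuation_min_row_operation {K : Type*} [Field K] {n : ℕ}
    (v : AddValuation K (WithTop ℤ))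
    (hsurj : ∀ m : ℤ, ∃ y : K, v y = (m : WithTop ℤ))
    (hker : ∀ y : K, v y = ⊤ → y = 0)
    (C : Set (Fin n → ℝ)) (hC : IsRatHalfOpenCone C)
    (c : K) (γ : Fin n → ℤ) (hc : v c = (0 : WithTop ℤ))
    (hγ : ∀ ω ∈ C, ipR γ ω = 0)
    (w : AddMonoidAlgebra K (Fin n → ℤ)) (hwcoeff : ∀ β, 0 ≤ v (w.coeff β))
    (hwsupp : ∀ β ∈ w.coeff.support, ∀ ω ∈ C, 0 ≤ ipR β ω)
    (f₁ f₂ : AddMonoidAlgebra K (Fin n → ℤ))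
    (x : Fin n → Kˣ) (ω : Fin n → ℤ)
    (hx : ∀ i, v ((x i : K)) = (ω i : WithTop ℤ))
    (hω : (fun i => (ω i : ℝ)) ∈ C) :
    min (v (evalL ((AddMonoidAlgebra.single γ c) * f₁ + w * f₂) x))
        (v (evalL f₂ x))
      = min (v (evalL f₁ x)) (v (evalL f₂ x)) := by
  classical
  set E := AddMonoidAlgebra.lift K K (Fin n → ℤ) (evalHom x) with hE
  -- the term has valuation 0
  have hγ0 : (∑ i, γ i * ω i : ℤ) = 0 := by
    have := hγ _ hω
    have h2 : ((∑ i, γ i * ω i : ℤ) : ℝ) = 0 := by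
      rw [← this]; unfold ipR; push_cast; ring_nf
    exact_mod_cast h2
  have hterm : v (evalL (AddMonoidAlgebra.single γ c) x) = 0 := by
    unfold evalL
    rcases eq_or_ne c 0 with rfl | hc0
    · simp at hc
    · rw [AddMonoidAlgebra.coeff_single, Finsupp.support_single_ne_zero _ hc0]
      simp only [Finset.sum_singleton, Finsupp.single_eq_same]
      rw [v.map_mul, hc, val_prod v x ω hx γ, hγ0]
      rfl
  -- E agrees with evalL and is a ring hom
  have hEeq : ∀ f : AddMonoidAlgebra K (Fin n → ℤ), evalL f x = E f := fun f => evalL_eq f x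
  have hmul : ∀ f g : AddMonoidAlgebra K (Fin n → ℤ),
      evalL (f * g) x = evalL f x * evalL g x := by
    intro f g; rw [hEeq, hEeq, hEeq, map_mul]
  have hadd : evalL ((AddMonoidAlgebra.single γ c) * f₁ + w * f₂) x
      = evalL ((AddMonoidAlgebra.single γ c) * f₁) x + evalL (w * f₂) x := by
    rw [hEeq, hEeq, hEeq, map_add]
  -- valuation of w eval is nonneg
  have hw : 0 ≤ v (evalL w x) := by
    unfold evalL
    refine v.map_le_sum fun β hβ => ?_
    rw [v.map_mul, val_prod v x ω hx β]
    have hβω : (0 : ℤ) ≤ ∑ i, β i * ω i := by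
      have := hwsupp β hβ _ hω
      have h2 : (0:ℝ) ≤ ((∑ i, β i * ω i : ℤ) : ℝ) := by
        unfold ipR at this; push_cast; push_cast at this; linarith [this]
      exact_mod_cast h2
    have : (0 : WithTop ℤ) ≤ ((∑ i, β i * ω i : ℤ) : WithTop ℤ) := by exact_mod_cast hβω
    exact add_nonneg (hwcoeff β) this
  set A := v (evalL f₁ x) with hA
  set B := v (evalL f₂ x) with hB
  have ha : v (evalL ((AddMonoidAlgebra.single γ c) * f₁) x) = A := by
    rw [hmul, v.map_mul, hterm, zero_add]
  have hb : B ≤ v (evalL (w * f₂) x) := by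
    rw [hmul, v.map_mul]
    calc B = 0 + B := (zero_add B).symm
    _ ≤ v (evalL w x) + B := add_le_add_left hw B
  rw [hadd]
  rcases lt_or_ge A B with h | h
  · have hlt : v (evalL ((AddMonoidAlgebra.single γ c) * f₁) x) < v (evalL (w * f₂) x) := by
      rw [ha]; exact lt_of_lt_of_le h hb
    rw [addval_add_eq_left v hlt, ha, min_eq_left h.le]
  · have : B ≤ v (evalL ((AddMonoidAlgebra.single γ c) * f₁) x + evalL (w * f₂) x) := by
      refine le_trans ?_ (v.map_add _ _)
      rw [ha]
      exact le_min h hb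
    rw [min_eq_right this, min_eq_right h]
end
end

section
/- Let C₀ ⊆ ℝⁿ be a rational half-open cone and let P₀ be a model of C₀. Then C₀ is empty if and only if P₀ is empty. -/
noncomputable section

/-- Standard inner product of a rational vector with a real vector. -/
def ipQ {n : ℕ} (α : Fin n → ℚ) (ω : Fin n → ℝ) : ℝ := ∑ i, (α i : ℝ) * ω i

/-- The integer lattice ℤⁿ viewed inside ℝⁿ. -/
def intLattice (n : ℕ) : Set (Fin n → ℝ) := Set.range (castR (n := n))

/-- A rational polyhedron in ℝⁿ. -/
def IsRatPolyhedron {n : ℕ} (P : Set (Fin n → ℝ)) : Prop :=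
  ∃ (t : ℕ) (a : Fin t → (Fin n → ℚ)) (b : Fin t → ℚ),
    P = {ω | ∀ i, (b i : ℝ) ≤ ipQ (a i) ω}

/-- A (polyhedral) model of a rational half-open cone `C`: a rational polyhedron
`P` with `C ∩ ℤⁿ = P ∩ ℤⁿ` and `a·P ⊆ P` for all positive integers `a`. -/
def IsConeModel {n : ℕ} (C P : Set (Fin n → ℝ)) : Prop :=
  IsRatPolyhedron P ∧ C ∩ intLattice n = P ∩ intLattice n ∧
    ∀ a : ℕ, 0 < a → ∀ x ∈ P, (a : ℝ) • x ∈ P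

lemma exists_rat_point {n t s : ℕ} (a : Fin t → Fin n → ℚ) (b : Fin t → ℚ)
    (c : Fin s → Fin n → ℚ) (d : Fin s → ℚ) (ω : Fin n → ℝ)
    (h1 : ∀ i, (b i : ℝ) ≤ ipQ (a i) ω) (h2 : ∀ j, (d j : ℝ) < ipQ (c j) ω) :
    ∃ q : Fin n → ℚ, (∀ i, (b i : ℝ) ≤ ipQ (a i) fun k => (q k : ℝ)) ∧
      ∀ j, (d j : ℝ) < ipQ (c j) fun k => (q k : ℝ) := by
  classical
  set V : Submodule ℚ ℝ := Submodule.span ℚ (insert (1:ℝ) (Set.range ω)) with hVdef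
  have h1V : (1:ℝ) ∈ V := Submodule.subset_span (Set.mem_insert _ _)
  have hωV : ∀ k, ω k ∈ V := fun k =>
    Submodule.subset_span (Set.mem_insert_of_mem _ ⟨k, rfl⟩)
  set one : V := ⟨1, h1V⟩ with hone_def
  have hone : one ≠ 0 := by
    intro h
    exact one_ne_zero (congrArg Subtype.val h)
  have li : LinearIndepOn ℚ id ({one} : Set V) :=
    (linearIndepOn_singleton_iff ℚ).mpr hone
  set B : Module.Basis (li.extend (Set.subset_univ _)) ℚ V := Module.Basis.extend li with hBdef
  set one' : ↥(li.extend (Set.subset_univ _)) := ⟨one, li.subset_extend _ rfl⟩ with hone'def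
  have repr_eq : ∀ v : V, (v : ℝ) =
      ∑ b0 ∈ (B.repr v).support, (B.repr v b0 : ℝ) * ((b0 : V) : ℝ) := by
    intro v
    conv_lhs => rw [← B.linearCombination_repr v]
    rw [Finsupp.linearCombination_apply, Finsupp.sum]
    push_cast [hBdef, Module.Basis.extend_apply_self, Rat.smul_def]
    rfl
  set S : V → ℝ := fun v => ∑ b0 ∈ (B.repr v).support, |(B.repr v b0 : ℝ)| with hSdef
  have hSnonneg : ∀ v, 0 ≤ S v := fun v => Finset.sum_nonneg fun _ _ => abs_nonneg _
  -- the minimal positive gap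
  set Gset : Finset ℝ := insert (1:ℝ)
      (((Finset.univ.image fun i : Fin t => ipQ (a i) ω - (b i : ℝ)) ∪
        (Finset.univ.image fun j : Fin s => ipQ (c j) ω - (d j : ℝ))).filter fun x => 0 < x)
    with hGdef
  have hGne : Gset.Nonempty := ⟨1, Finset.mem_insert_self _ _⟩
  set δ : ℝ := Gset.min' hGne with hδdef
  have hδpos : 0 < δ := by
    have hmem : δ ∈ Gset := Gset.min'_mem hGne
    rcases Finset.mem_insert.mp hmem with h | h
    · exact lt_of_lt_of_eq one_pos h.symm
    · exact (Finset.mem_filter.mp h).2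
  have hδle : ∀ x ∈ Gset, δ ≤ x := fun x hx => Finset.min'_le _ _ hx
  -- the vectors of the constraints, as elements of V
  set w : Fin n → V := fun k => ⟨ω k, hωV k⟩ with hwdef
  set xi : Fin t → V := fun i => ∑ k, a i k • w k with hxidef
  set yj : Fin s → V := fun j => ∑ k, c j k • w k with hyjdef
  have hxiω : ∀ i, ((xi i : V) : ℝ) = ipQ (a i) ω := by
    intro i
    rw [hxidef]
    push_cast [Rat.smul_def]
    rfl
  have hyjω : ∀ j, ((yj j : V) : ℝ) = ipQ (c j) ω := by
    intro j
    rw [hyjdef]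
    push_cast [Rat.smul_def]
    rfl
  set M : ℝ := (∑ i, S (xi i)) + (∑ j, S (yj j)) + 1 with hMdef
  have hsum1 : 0 ≤ ∑ i, S (xi i) := Finset.sum_nonneg fun i _ => hSnonneg _
  have hsum2 : 0 ≤ ∑ j, S (yj j) := Finset.sum_nonneg fun j _ => hSnonneg _
  have hM1 : 1 ≤ M := by rw [hMdef]; linarith
  have hMx : ∀ i, S (xi i) ≤ M := by
    intro i
    have := Finset.single_le_sum (f := fun i => S (xi i)) (fun i _ => hSnonneg _)
      (Finset.mem_univ i)
    rw [hMdef]; linarith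
  have hMy : ∀ j, S (yj j) ≤ M := by
    intro j
    have := Finset.single_le_sum (f := fun j => S (yj j)) (fun j _ => hSnonneg _)
      (Finset.mem_univ j)
    rw [hMdef]; linarith
  set ε : ℝ := δ / (2 * M) with hεdef
  have hεpos : 0 < ε := div_pos hδpos (by linarith)
  have hεM : ε * M = δ / 2 := by
    rw [hεdef]; field_simp
  -- choose rational approximations of the basis vectors, exact at `one`
  have hrex : ∀ b0 : ↥(li.extend (Set.subset_univ _)), ∃ q0 : ℚ,
      |(q0 : ℝ) - ((b0 : V) : ℝ)| ≤ ε ∧ (b0 = one' → q0 = 1) := by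
    intro b0
    by_cases hb : b0 = one'
    · refine ⟨1, ?_, fun _ => rfl⟩
      have hb1 : ((b0 : V) : ℝ) = 1 := by rw [hb, hone'def]
      rw [hb1]
      simpa using hεpos.le
    · obtain ⟨q0, hq0⟩ := exists_rat_near (K := ℝ) ((b0 : V) : ℝ) hεpos
      exact ⟨q0, by rw [abs_sub_comm]; exact hq0.le, fun h => absurd h hb⟩
  choose r hrε hrone using hrex
  set L : V →ₗ[ℚ] ℚ := B.constr ℚ r with hLdef
  have hLone : L one = 1 := by
    have h1 : one = B one' := by rw [hBdef, Module.Basis.extend_apply_self]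
    rw [h1, hLdef, Module.Basis.constr_basis]
    exact hrone one' rfl
  have hLapprox : ∀ v : V, |((L v : ℚ) : ℝ) - (v : ℝ)| ≤ ε * S v := by
    intro v
    have hLv : ((L v : ℚ) : ℝ) = ∑ b0 ∈ (B.repr v).support, (B.repr v b0 : ℝ) * (r b0 : ℝ) := by
      rw [hLdef, Module.Basis.constr_apply, Finsupp.sum]
      push_cast [smul_eq_mul]
      rfl
    rw [hLv]
    conv_lhs => rw [repr_eq v]
    rw [← Finset.sum_sub_distrib]
    refine (Finset.abs_sum_le_sum_abs _ _).trans ?_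
    have hterm : ∀ b0 ∈ (B.repr v).support,
        |(B.repr v b0 : ℝ) * (r b0 : ℝ) - (B.repr v b0 : ℝ) * ((b0 : V) : ℝ)| ≤
          |(B.repr v b0 : ℝ)| * ε := by
      intro b0 _
      rw [← mul_sub, abs_mul]
      exact mul_le_mul_of_nonneg_left (hrε b0) (abs_nonneg _)
    refine (Finset.sum_le_sum hterm).trans ?_
    rw [← Finset.sum_mul, hSdef, mul_comm]
  have hLxi : ∀ i, L (xi i) = ∑ k, a i k * L (w k) := by
    intro i
    simp [hxidef, map_sum, map_smul, smul_eq_mul]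
  have hLyj : ∀ j, L (yj j) = ∑ k, c j k * L (w k) := by
    intro j
    simp [hyjdef, map_sum, map_smul, smul_eq_mul]
  refine ⟨fun k => L (w k), ?_, ?_⟩
  · intro i
    have hip : ipQ (a i) (fun k => ((L (w k) : ℚ) : ℝ)) = ((L (xi i) : ℚ) : ℝ) := by
      simp only [ipQ]
      rw [hLxi i]
      push_cast
      rfl
    rw [hip]
    rcases eq_or_lt_of_le (h1 i) with heq | hlt
    · have hco : ((b i • one : V) : ℝ) = (b i : ℝ) := by
        simp [hone_def, Rat.smul_def]
      have hxieq : xi i = (b i) • one := by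
        apply Subtype.ext
        rw [hxiω i, ← heq, hco]
      rw [hxieq, map_smul, hLone, smul_eq_mul, mul_one]
    · have hgapmem : ipQ (a i) ω - (b i : ℝ) ∈ Gset := by
        rw [hGdef]
        refine Finset.mem_insert_of_mem (Finset.mem_filter.mpr ⟨?_, sub_pos.mpr hlt⟩)
        exact Finset.mem_union_left _ (Finset.mem_image.mpr ⟨i, Finset.mem_univ i, rfl⟩)
      have hgap := hδle _ hgapmem
      have happ2 : |((L (xi i) : ℚ) : ℝ) - ipQ (a i) ω| ≤ δ / 2 := by
        have h3 := (hLapprox (xi i)).trans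
          (le_of_le_of_eq (mul_le_mul_of_nonneg_left (hMx i) hεpos.le) hεM)
        rwa [hxiω i] at h3
      have habs := abs_le.mp happ2
      linarith [habs.1, hgap, hδpos]
  · intro j
    have hip : ipQ (c j) (fun k => ((L (w k) : ℚ) : ℝ)) = ((L (yj j) : ℚ) : ℝ) := by
      simp only [ipQ]
      rw [hLyj j]
      push_cast
      rfl
    rw [hip]
    have hgapmem : ipQ (c j) ω - (d j : ℝ) ∈ Gset := by
      rw [hGdef]
      refine Finset.mem_insert_of_mem (Finset.mem_filter.mpr ⟨?_, sub_pos.mpr (h2 j)⟩)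
      exact Finset.mem_union_right _ (Finset.mem_image.mpr ⟨j, Finset.mem_univ j, rfl⟩)
    have hgap := hδle _ hgapmem
    have happ2 : |((L (yj j) : ℚ) : ℝ) - ipQ (c j) ω| ≤ δ / 2 := by
      have h3 := (hLapprox (yj j)).trans
        (le_of_le_of_eq (mul_le_mul_of_nonneg_left (hMy j) hεpos.le) hεM)
      rwa [hyjω j] at h3
    have habs := abs_le.mp happ2
    linarith [habs.1, hgap, hδpos]

lemma exists_int_scale {n : ℕ} (q : Fin n → ℚ) :
    ∃ (D : ℕ) (z : Fin n → ℤ), 0 < D ∧ ∀ k, (z k : ℚ) = (D : ℚ) * q k := by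
  classical
  refine ⟨∏ k, (q k).den, fun k => (q k).num * (((∏ k, (q k).den) / (q k).den : ℕ) : ℤ),
    Finset.prod_pos fun k _ => (q k).pos, fun k => ?_⟩
  have hdvd : (q k).den ∣ ∏ k, (q k).den := Finset.dvd_prod_of_mem _ (Finset.mem_univ k)
  have hN : ((∏ k, (q k).den) / (q k).den) * (q k).den = ∏ k, (q k).den :=
    Nat.div_mul_cancel hdvd
  have hNq : ((((∏ k, (q k).den) / (q k).den : ℕ)) : ℚ) * ((q k).den : ℚ) =
      ((∏ k, (q k).den : ℕ) : ℚ) := by exact_mod_cast congrArg (Nat.cast : ℕ → ℚ) hN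
  have hden : ((q k).den : ℚ) ≠ 0 := Nat.cast_ne_zero.mpr (q k).den_nz
  have hq : (q k) * ((q k).den : ℚ) = ((q k).num : ℚ) := Rat.mul_den_eq_num _
  rw [Int.cast_mul, Int.cast_natCast]
  calc ((q k).num : ℚ) * ((((∏ k, (q k).den) / (q k).den : ℕ)) : ℚ)
      = ((((∏ k, (q k).den) / (q k).den : ℕ)) : ℚ) * ((q k) * ((q k).den : ℚ)) := by
        rw [hq]; ring
    _ = (((((∏ k, (q k).den) / (q k).den : ℕ)) : ℚ) * ((q k).den : ℚ)) * q k := by ring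
    _ = ((∏ k, (q k).den : ℕ) : ℚ) * q k := by rw [hNq]

/-- A rational half-open cone is empty iff any model of it is empty. -/
theorem cone_empty_iff_model_empty {n : ℕ} (C P : Set (Fin n → ℝ))
    (hC : IsRatHalfOpenCone C) (hP : IsConeModel C P) :
    C = ∅ ↔ P = ∅ := by
  obtain ⟨dC, eC, φ, χ, hCeq⟩ := hC
  obtain ⟨⟨t, a, b, hPeq⟩, hlat, hscale⟩ := hP
  constructor
  · intro hCe
    by_contra hPne
    obtain ⟨x, hx⟩ := Set.nonempty_iff_ne_empty.mpr hPne
    have hx' : ∀ i, (b i : ℝ) ≤ ipQ (a i) x := by rw [hPeq] at hx; exact hx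
    obtain ⟨q, hq1, -⟩ := exists_rat_point a b (fun _ : Fin 0 => 0) (fun _ => 0) x hx'
      (fun j => j.elim0)
    obtain ⟨D, z, hD, hz⟩ := exists_int_scale q
    have hqP : (fun k => ((q k : ℚ) : ℝ)) ∈ P := by rw [hPeq]; exact hq1
    have hzcast : castR z = (D : ℝ) • fun k => ((q k : ℚ) : ℝ) := by
      funext k
      have := hz k
      have h2 : ((z k : ℚ) : ℝ) = (((D : ℚ) * q k : ℚ) : ℝ) := by rw [this]
      push_cast at h2
      simpa [castR] using h2
    have hzP : castR z ∈ P := by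
      rw [hzcast]
      exact hscale D hD _ hqP
    have hmem : castR z ∈ P ∩ intLattice n := ⟨hzP, ⟨z, rfl⟩⟩
    rw [← hlat, hCe] at hmem
    simp at hmem
  · intro hPe
    by_contra hCne
    obtain ⟨x, hx⟩ := Set.nonempty_iff_ne_empty.mpr hCne
    rw [hCeq] at hx
    obtain ⟨hx1, hx2⟩ := hx
    have hRQ : ∀ (v : Fin n → ℤ) (y : Fin n → ℝ),
        ipQ (fun k => (v k : ℚ)) y = ipR v y := by
      intro v y
      simp [ipQ, ipR]
    obtain ⟨q, hq1, hq2⟩ := exists_rat_point (fun i k => ((φ i k : ℤ) : ℚ)) (fun _ => 0)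
      (fun j k => ((χ j k : ℤ) : ℚ)) (fun _ => 0) x
      (fun i => by rw [hRQ]; simpa using hx1 i)
      (fun j => by rw [hRQ]; simpa using hx2 j)
    obtain ⟨D, z, hD, hz⟩ := exists_int_scale q
    have hzcast : castR z = (D : ℝ) • fun k => ((q k : ℚ) : ℝ) := by
      funext k
      have h2 : ((z k : ℚ) : ℝ) = (((D : ℚ) * q k : ℚ) : ℝ) := by rw [hz k]
      push_cast at h2
      simpa [castR] using h2
    have hDpos : (0:ℝ) < D := by exact_mod_cast hD
    have hzC : castR z ∈ C := by
      rw [hCeq]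
      constructor
      · intro i
        have h0 : (0:ℝ) ≤ ipQ (fun k => ((φ i k : ℤ) : ℚ)) fun k => ((q k : ℚ) : ℝ) := by
          simpa using hq1 i
        have : ipR (φ i) (castR z) = D * ipQ (fun k => ((φ i k : ℤ) : ℚ)) fun k => ((q k : ℚ) : ℝ) := by
          rw [hzcast, ← hRQ]
          simp only [ipQ, Pi.smul_apply, smul_eq_mul, Finset.mul_sum]
          exact Finset.sum_congr rfl fun k _ => by ring
        rw [this]
        positivity
      · intro j
        have h0 : (0:ℝ) < ipQ (fun k => ((χ j k : ℤ) : ℚ)) fun k => ((q k : ℚ) : ℝ) := by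
          simpa using hq2 j
        have : ipR (χ j) (castR z) = D * ipQ (fun k => ((χ j k : ℤ) : ℚ)) fun k => ((q k : ℚ) : ℝ) := by
          rw [hzcast, ← hRQ]
          simp only [ipQ, Pi.smul_apply, smul_eq_mul, Finset.mul_sum]
          exact Finset.sum_congr rfl fun k _ => by ring
        rw [this]
        positivity
    have hmem : castR z ∈ C ∩ intLattice n := ⟨hzC, ⟨z, rfl⟩⟩
    rw [hlat, hPe] at hmem
    simp at hmem
end
end

section
/- Let C₀ ⊆ ℝⁿ be a nonempty rational half-open cone and let P₀ be a model of C₀. Then (i) P₀ is contained in the topological closure cl(C₀) of C₀, and (ii) for every topologically closed set B ⊆ ℝⁿ with P₀ ⊆ B and λ·B ⊆ B for all real λ > 0, one has cl(C₀) ⊆ B. In other words, cl(C₀) is the smallest closed cone containing P₀. -/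
noncomputable section

namespace ConeAux

open Finset

def castQ {n : ℕ} (q : Fin n → ℚ) : Fin n → ℝ := fun i => (q i : ℝ)

lemma castQ_add {n : ℕ} (p q : Fin n → ℚ) : castQ (p + q) = castQ p + castQ q := by
  funext i; simp [castQ]

lemma ipQ_castQ {n : ℕ} (α : Fin n → ℚ) (q : Fin n → ℚ) :
    ipQ α (castQ q) = ((∑ j, α j * q j : ℚ) : ℝ) := by
  simp [ipQ, castQ]

/-- the rational dot-product bilinear form -/
def dotB (ι : Type) [Fintype ι] : LinearMap.BilinForm ℚ (ι → ℚ) :=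
  LinearMap.mk₂ ℚ (fun x y => ∑ i, x i * y i)
    (fun x x' y => by simp [add_mul, Finset.sum_add_distrib])
    (fun c x y => by simp [Finset.mul_sum, mul_assoc])
    (fun x y y' => by simp [mul_add, Finset.sum_add_distrib])
    (fun c x y => by simp [Finset.mul_sum, mul_left_comm])

@[simp] lemma dotB_apply {ι : Type} [Fintype ι] (x y : ι → ℚ) :
    dotB ι x y = ∑ i, x i * y i := rfl

lemma dotB_refl (ι : Type) [Fintype ι] : (dotB ι).IsRefl := by
  intro x y h
  simpa [mul_comm] using h

lemma sum_mul_self_eq_zero {ι : Type} [Fintype ι] {x : ι → ℚ}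
    (h : ∑ i, x i * x i = 0) : x = 0 := by
  funext i
  have := (Finset.sum_eq_zero_iff_of_nonneg (fun i _ => mul_self_nonneg (x i))).mp h i
    (Finset.mem_univ i)
  exact mul_self_eq_zero.mp this

lemma dotB_restrict_nondeg {ι : Type} [Fintype ι] (W : Submodule ℚ (ι → ℚ)) :
    ((dotB ι).restrict W).Nondegenerate := by
  refine ⟨fun x hx => ?_, fun x hx => ?_⟩
  all_goals
    have := hx x
    simp only [LinearMap.BilinForm.restrict_apply, dotB_apply] at this
    exact Subtype.ext (sum_mul_self_eq_zero this)

lemma isCompl_dotB {ι : Type} [Fintype ι] (W : Submodule ℚ (ι → ℚ)) :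
    IsCompl W ((dotB ι).orthogonal W) :=
  LinearMap.BilinForm.isCompl_orthogonal_of_restrict_nondegenerate
    (dotB_refl ι) (dotB_restrict_nondeg W)

/-- decomposition of any vector -/
lemma exists_decomp {ι : Type} [Fintype ι] (W : Submodule ℚ (ι → ℚ)) (z : ι → ℚ) :
    ∃ u ∈ W, ∃ k, (∀ w ∈ W, ∑ i, w i * k i = 0) ∧ z = u + k := by
  have h := (isCompl_dotB W).sup_eq_top
  have hz : z ∈ W ⊔ (dotB ι).orthogonal W := h ▸ Submodule.mem_top
  obtain ⟨u, hu, k, hk, hsum⟩ := Submodule.mem_sup.mp hz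
  exact ⟨u, hu, k, fun w hw => hk w hw, hsum.symm⟩

/-- the linear map v ↦ (⟨a i, v⟩)_i -/
def Tmap {n : ℕ} {ι : Type} [Fintype ι] (a : ι → (Fin n → ℚ)) :
    (Fin n → ℚ) →ₗ[ℚ] (ι → ℚ) where
  toFun v := fun i => ∑ j, a i j * v j
  map_add' v w := by funext i; simp [mul_add, Finset.sum_add_distrib]
  map_smul' c v := by funext i; simp [Finset.mul_sum, mul_left_comm]

/-- a rational linear system with a real solution has a rational solution -/
theorem exists_rat_sol {n : ℕ} {ι : Type} [Fintype ι] (a : ι → (Fin n → ℚ)) (b : ι → ℚ)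
    (x : Fin n → ℝ) (hx : ∀ i, ipQ (a i) x = (b i : ℝ)) :
    ∃ q : Fin n → ℚ, ∀ i, ∑ j, a i j * q j = b i := by
  by_contra hcon
  push_neg at hcon
  have hb : b ∉ LinearMap.range (Tmap a) := by
    rintro ⟨q, hq⟩
    obtain ⟨i, hi⟩ := hcon q
    exact hi (congrFun hq i)
  obtain ⟨u, hu, k, hk, hbuk⟩ := exists_decomp (LinearMap.range (Tmap a)) b
  -- k ≠ 0
  have hkne : k ≠ 0 := by
    rintro rfl
    rw [add_zero] at hbuk
    exact hb (hbuk ▸ hu)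
  -- ∑ i, a i j * k i = 0 for each column j
  have hcol : ∀ j, ∑ i, a i j * k i = 0 := by
    intro j
    have := hk (Tmap a (Pi.single j 1)) ⟨Pi.single j 1, rfl⟩
    simpa [Tmap, Pi.single_apply, Finset.mul_sum, mul_ite] using this
  -- rational positivity : ∑ b i * k i > 0
  have huk : ∑ i, u i * k i = 0 := hk u hu
  have hkk : 0 < ∑ i, k i * k i := by
    rcases lt_or_eq_of_le (Finset.sum_nonneg fun i _ => mul_self_nonneg (k i)) with h | h
    · exact h
    · exact absurd (sum_mul_self_eq_zero h.symm) hkne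
  have hbk : 0 < ∑ i, b i * k i := by
    have : ∑ i, b i * k i = ∑ i, u i * k i + ∑ i, k i * k i := by
      rw [← Finset.sum_add_distrib]
      refine Finset.sum_congr rfl fun i _ => ?_
      rw [hbuk, Pi.add_apply, add_mul]
    rw [this, huk, zero_add]; exact hkk
  -- real computation : ∑ i, (k i) * b i = 0
  have hreal : ∑ i, (k i : ℝ) * (b i : ℝ) = 0 := by
    calc ∑ i, (k i : ℝ) * (b i : ℝ) = ∑ i, (k i : ℝ) * ipQ (a i) x := by
          simp_rw [hx]
      _ = ∑ j, (∑ i, (a i j : ℚ) * k i : ℚ) * x j := by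
          simp only [ipQ, Finset.mul_sum]
          rw [Finset.sum_comm]
          refine Finset.sum_congr rfl fun j _ => ?_
          push_cast
          rw [Finset.sum_mul]
          refine Finset.sum_congr rfl fun i _ => by ring
      _ = 0 := by simp [hcol]
  have : ((∑ i, b i * k i : ℚ) : ℝ) = 0 := by
    push_cast
    rw [← hreal]
    exact Finset.sum_congr rfl fun i _ => by ring
  rw [Rat.cast_eq_zero] at this
  exact absurd this (ne_of_gt hbk)

/-- `ipQ α` as an ℝ-linear map -/
def ipQlin {n : ℕ} (α : Fin n → ℚ) : (Fin n → ℝ) →ₗ[ℝ] ℝ where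
  toFun ω := ipQ α ω
  map_add' v w := by simp [ipQ, mul_add, Finset.sum_add_distrib]
  map_smul' c v := by simp [ipQ, Finset.mul_sum, mul_left_comm]

/-- real dot with fixed second argument, linear in first -/
def rdotlin {n : ℕ} (u : Fin n → ℝ) : (Fin n → ℝ) →ₗ[ℝ] ℝ where
  toFun v := ∑ i, v i * u i
  map_add' v w := by simp [add_mul, Finset.sum_add_distrib]
  map_smul' c v := by simp [Finset.mul_sum, mul_assoc]

lemma castQ_smul {n : ℕ} (c : ℚ) (q : Fin n → ℚ) :
    castQ (c • q) = (c : ℝ) • castQ q := by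
  funext i; simp [castQ]

lemma castQ_add' {n : ℕ} (p q : Fin n → ℚ) : castQ (p + q) = castQ p + castQ q := by
  funext i; simp [castQ]

/-- approximate a real solution of the homogeneous system by rational solutions -/
theorem approx_ker {n : ℕ} {ι : Type} [Fintype ι] (a : ι → (Fin n → ℚ)) (y : Fin n → ℝ)
    (hy : ∀ i, ipQ (a i) y = 0) (ε : ℝ) (hε : 0 < ε) :
    ∃ k : Fin n → ℚ, (∀ i, ∑ j, a i j * k j = 0) ∧ dist (castQ k) y < ε := by
  classical
  set U : Submodule ℚ (Fin n → ℚ) := Submodule.span ℚ (Set.range a) with hU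
  set K : Submodule ℚ (Fin n → ℚ) := (dotB (Fin n)).orthogonal U with hK
  -- members of K satisfy the system
  have hKsys : ∀ k ∈ K, ∀ i, ∑ j, a i j * k j = 0 := by
    intro k hk i
    have := hk (a i) (Submodule.subset_span ⟨i, rfl⟩)
    simpa using this
  set SU : Submodule ℝ (Fin n → ℝ) := Submodule.span ℝ (castQ '' (U : Set _)) with hSU
  set SK : Submodule ℝ (Fin n → ℝ) := Submodule.span ℝ (castQ '' (K : Set _)) with hSK
  -- SU ⊔ SK = ⊤
  have hsup : SU ⊔ SK = ⊤ := by
    rw [eq_top_iff, ← (Pi.basisFun ℝ (Fin n)).span_eq, Submodule.span_le]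
    rintro _ ⟨j, rfl⟩
    have hdec : (Pi.single j 1 : Fin n → ℚ) ∈ U ⊔ K := by
      rw [(isCompl_dotB U).sup_eq_top]; trivial
    obtain ⟨u, hu, k, hk, hsum⟩ := Submodule.mem_sup.mp hdec
    have : (Pi.basisFun ℝ (Fin n)) j = castQ u + castQ k := by
      rw [← castQ_add', hsum]
      funext i
      simp only [castQ, Pi.basisFun_apply, Pi.single_apply]
      split_ifs <;> simp
    rw [SetLike.mem_coe, this]
    exact Submodule.add_mem _
      (Submodule.mem_sup_left (Submodule.subset_span ⟨u, hu, rfl⟩))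
      (Submodule.mem_sup_right (Submodule.subset_span ⟨k, hk, rfl⟩))
  -- SK members satisfy the real system
  have hSKsys : ∀ z ∈ SK, ∀ i, ipQ (a i) z = 0 := by
    intro z hz i
    have hle : SK ≤ LinearMap.ker (ipQlin (a i)) := by
      rw [hSK, Submodule.span_le]
      rintro _ ⟨k, hk, rfl⟩
      have : ipQ (a i) (castQ k) = ((∑ j, a i j * k j : ℚ) : ℝ) := by
        simp [ipQ, castQ]
      simp only [SetLike.mem_coe, LinearMap.mem_ker]
      show ipQ (a i) (castQ k) = 0
      rw [this, hKsys k hk i, Rat.cast_zero]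
    exact hle hz
  -- decompose y
  obtain ⟨u', hu', k', hk', hy'⟩ := Submodule.mem_sup.mp
    (hsup ▸ Submodule.mem_top : y ∈ SU ⊔ SK)
  -- u' satisfies the real system
  have hu'sys : ∀ i, ipQ (a i) u' = 0 := by
    intro i
    have : u' = y - k' := by rw [← hy']; ring
    rw [this, show ipQ (a i) (y - k') = ipQlin (a i) (y - k') from rfl, map_sub]
    show ipQ (a i) y - ipQ (a i) k' = 0
    rw [hy i, hSKsys k' hk' i, sub_zero]
  -- u' is orthogonal to SU
  have hortho : ∀ v ∈ SU, ∑ i, v i * u' i = 0 := by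
    intro v hv
    have hle : SU ≤ LinearMap.ker (rdotlin u') := by
      rw [hSU, Submodule.span_le]
      rintro _ ⟨u, hu, rfl⟩
      simp only [SetLike.mem_coe, LinearMap.mem_ker]
      show ∑ i, castQ u i * u' i = 0
      induction hu using Submodule.span_induction with
      | mem w hw =>
          obtain ⟨i, rfl⟩ := hw
          simpa [ipQ, castQ] using hu'sys i
      | zero => simp [castQ]
      | add w₁ w₂ h₁ h₂ ih₁ ih₂ =>
          have : ∀ i, castQ (w₁ + w₂) i = castQ w₁ i + castQ w₂ i := by
            intro i; simp [castQ]
          simp_rw [this, add_mul, Finset.sum_add_distrib, ih₁, ih₂, add_zero]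
      | smul c w h ih =>
          have : ∀ i, castQ (c • w) i = (c : ℝ) * castQ w i := by
            intro i; simp [castQ]
          simp_rw [this, mul_assoc, ← Finset.mul_sum, ih, mul_zero]
    exact hle hv
  -- hence u' = 0
  have hu'0 : u' = 0 := by
    have h0 : ∑ i, u' i * u' i = 0 := hortho u' hu'
    funext i
    have := (Finset.sum_eq_zero_iff_of_nonneg
      (fun i _ => mul_self_nonneg (u' i))).mp h0 i (Finset.mem_univ i)
    exact mul_self_eq_zero.mp this
  have hyk : y ∈ SK := by rw [← hy', hu'0, zero_add]; exact hk'
  -- now approximate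
  obtain ⟨m, f, g, hgsum⟩ := Submodule.mem_span_set'.mp hyk
  rcases Nat.eq_zero_or_pos m with hm | hm
  · subst hm
    refine ⟨0, fun i => by simp, ?_⟩
    have : y = 0 := by rw [← hgsum]; simp
    have h0 : castQ (0 : Fin n → ℚ) = 0 := by funext i; simp [castQ]
    rw [this, h0, dist_self]
    exact hε
  · -- pick kk i with castQ (kk i) = g i
    have hgmem : ∀ i : Fin m, ∃ kk ∈ K, castQ kk = (g i : Fin n → ℝ) := by
      intro i
      obtain ⟨kk, hkk, hckk⟩ := (g i).2
      exact ⟨kk, hkk, hckk⟩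
    choose kk hkkK hkkc using hgmem
    -- rational approximations of the coefficients
    have hδ : ∀ i : Fin m, 0 < ε / (2 * m * (‖(g i : Fin n → ℝ)‖ + 1)) := by
      intro i
      apply div_pos hε
      positivity
    have hr : ∀ i : Fin m, ∃ r : ℚ, |f i - (r : ℝ)| < ε / (2 * m * (‖(g i : Fin n → ℝ)‖ + 1)) :=
      fun i => exists_rat_near (f i) (hδ i)
    choose r hrc using hr
    refine ⟨∑ i, r i • kk i, ?_, ?_⟩
    · intro i
      exact hKsys _ (Submodule.sum_mem _ fun i _ => Submodule.smul_mem _ _ (hkkK i)) i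
    · have hcast : castQ (∑ i, r i • kk i) = ∑ i, (r i : ℝ) • (g i : Fin n → ℝ) := by
        funext j
        simp only [castQ, Finset.sum_apply, Pi.smul_apply, smul_eq_mul]
        push_cast
        refine Finset.sum_congr rfl fun i _ => ?_
        rw [← congrFun (hkkc i) j]
        simp [castQ]
      rw [dist_eq_norm, hcast, ← hgsum, ← Finset.sum_sub_distrib]
      have hterm : ∀ i : Fin m, ‖(r i : ℝ) • (g i : Fin n → ℝ) - f i • (g i : Fin n → ℝ)‖
          ≤ ε / (2 * m) := by
        intro i
        rw [← sub_smul, norm_smul, Real.norm_eq_abs, abs_sub_comm]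
        have h1 : |f i - (r i : ℝ)| * ‖(g i : Fin n → ℝ)‖
            ≤ (ε / (2 * m * (‖(g i : Fin n → ℝ)‖ + 1))) * (‖(g i : Fin n → ℝ)‖ + 1) := by
          apply mul_le_mul (le_of_lt (hrc i)) (by linarith [norm_nonneg (g i : Fin n → ℝ)])
            (norm_nonneg _) (le_of_lt (hδ i))
        calc |f i - (r i : ℝ)| * ‖(g i : Fin n → ℝ)‖
            ≤ (ε / (2 * m * (‖(g i : Fin n → ℝ)‖ + 1))) * (‖(g i : Fin n → ℝ)‖ + 1) := h1
          _ = ε / (2 * m) := by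
              field_simp
      calc ‖∑ i : Fin m, ((r i : ℝ) • (g i : Fin n → ℝ) - f i • (g i : Fin n → ℝ))‖
          ≤ ∑ i : Fin m, ‖(r i : ℝ) • (g i : Fin n → ℝ) - f i • (g i : Fin n → ℝ)‖ :=
            norm_sum_le _ _
        _ ≤ ∑ _i : Fin m, ε / (2 * m) := Finset.sum_le_sum fun i _ => hterm i
        _ = ε / 2 := by
            rw [Finset.sum_const, Finset.card_univ, Fintype.card_fin, nsmul_eq_mul]
            field_simp
        _ < ε := by linarith
/-- rational solutions of a rational affine system are dense near real solutions -/
theorem rat_dense_affine {n : ℕ} {ι : Type} [Fintype ι] (a : ι → (Fin n → ℚ)) (b : ι → ℚ)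
    (x : Fin n → ℝ) (hx : ∀ i, ipQ (a i) x = (b i : ℝ)) (ε : ℝ) (hε : 0 < ε) :
    ∃ q : Fin n → ℚ, (∀ i, ∑ j, a i j * q j = b i) ∧ dist (castQ q) x < ε := by
  obtain ⟨q₀, hq₀⟩ := exists_rat_sol a b x hx
  have hker : ∀ i, ipQ (a i) (x - castQ q₀) = 0 := by
    intro i
    have h1 : ipQ (a i) (x - castQ q₀) = ipQ (a i) x - ipQ (a i) (castQ q₀) := by
      simp [ipQ, mul_sub, Finset.sum_sub_distrib]
    rw [h1, hx i, ipQ_castQ, hq₀ i, sub_self]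
  obtain ⟨k, hk1, hk2⟩ := approx_ker a (x - castQ q₀) hker ε hε
  refine ⟨q₀ + k, fun i => ?_, ?_⟩
  · have : ∑ j, a i j * (q₀ + k) j = ∑ j, a i j * q₀ j + ∑ j, a i j * k j := by
      simp [mul_add, Finset.sum_add_distrib]
    rw [this, hq₀ i, hk1 i, add_zero]
  · have hc : castQ (q₀ + k) = castQ q₀ + castQ k := by funext i; simp [castQ]
    rw [dist_eq_norm] at hk2 ⊢
    rw [hc]
    have : castQ q₀ + castQ k - x = castQ k - (x - castQ q₀) := by abel
    rw [this]
    exact hk2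

/-- rational points are dense in sets given by weak and strict rational inequalities -/
theorem rat_dense_mixed {n s t : ℕ} (a : Fin s → (Fin n → ℚ)) (b : Fin s → ℚ)
    (c : Fin t → (Fin n → ℚ)) (d : Fin t → ℚ) (x : Fin n → ℝ)
    (hx1 : ∀ i, (b i : ℝ) ≤ ipQ (a i) x) (hx2 : ∀ j, (d j : ℝ) < ipQ (c j) x)
    (ε : ℝ) (hε : 0 < ε) :
    ∃ q : Fin n → ℚ, (∀ i, (b i : ℝ) ≤ ipQ (a i) (castQ q)) ∧
      (∀ j, (d j : ℝ) < ipQ (c j) (castQ q)) ∧ dist (castQ q) x < ε := by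
  classical
  -- margin of a constraint
  set M : (Fin n → ℚ) → ℝ := fun α => ∑ j, |(α j : ℝ)| with hM
  have hMnn : ∀ α, 0 ≤ M α := fun α => Finset.sum_nonneg fun j _ => abs_nonneg _
  -- perturbation bound
  have hpert : ∀ (α : Fin n → ℚ) (z : Fin n → ℝ),
      |ipQ α z - ipQ α x| ≤ M α * dist z x := by
    intro α z
    have h1 : ipQ α z - ipQ α x = ∑ j, (α j : ℝ) * (z j - x j) := by
      simp [ipQ, mul_sub, Finset.sum_sub_distrib]
    rw [h1]
    calc |∑ j, (α j : ℝ) * (z j - x j)| ≤ ∑ j, |(α j : ℝ) * (z j - x j)| :=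
          Finset.abs_sum_le_sum_abs _ _
      _ ≤ ∑ j, |(α j : ℝ)| * dist z x := by
          refine Finset.sum_le_sum fun j _ => ?_
          rw [abs_mul]
          refine mul_le_mul_of_nonneg_left ?_ (abs_nonneg _)
          rw [← Real.norm_eq_abs, ← Pi.sub_apply]
          calc ‖(z - x) j‖ ≤ ‖z - x‖ := norm_le_pi_norm _ j
            _ = dist z x := (dist_eq_norm z x).symm
      _ = M α * dist z x := by rw [← Finset.sum_mul]
  -- the margins
  set δa : Fin s → ℝ := fun i =>
    if ipQ (a i) x = (b i : ℝ) then ε else (ipQ (a i) x - b i) / (M (a i) + 1) with hδa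
  set δc : Fin t → ℝ := fun j => (ipQ (c j) x - d j) / (M (c j) + 1) with hδc
  have hδapos : ∀ i, 0 < δa i := by
    intro i
    rw [hδa]
    dsimp only
    split_ifs with h
    · exact hε
    · have : (b i : ℝ) < ipQ (a i) x := lt_of_le_of_ne (hx1 i) (fun h' => h h'.symm)
      apply div_pos (by linarith) (by linarith [hMnn (a i)])
  have hδcpos : ∀ j, 0 < δc j := by
    intro j
    apply div_pos (by linarith [hx2 j]) (by linarith [hMnn (c j)])
  -- the global ε'
  set F : Finset ℝ := insert ε ((Finset.univ.image δa) ∪ (Finset.univ.image δc)) with hF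
  have hFne : F.Nonempty := ⟨ε, by simp [hF]⟩
  set ε' : ℝ := F.min' hFne with hε'
  have hFpos : ∀ y ∈ F, 0 < y := by
    intro y hy
    rw [hF] at hy
    simp only [Finset.mem_insert, Finset.mem_union, Finset.mem_image, Finset.mem_univ,
      true_and] at hy
    rcases hy with rfl | ⟨i, rfl⟩ | ⟨j, rfl⟩
    · exact hε
    · exact hδapos i
    · exact hδcpos j
  have hε'pos : 0 < ε' := hFpos _ (F.min'_mem hFne)
  have hε'le : ε' ≤ ε := Finset.min'_le _ _ (by rw [hF]; exact Finset.mem_insert_self _ _)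
  have hε'a : ∀ i, ε' ≤ δa i := fun i => Finset.min'_le _ _ (by
    rw [hF]
    exact Finset.mem_insert_of_mem (Finset.mem_union_left _
      (Finset.mem_image_of_mem _ (Finset.mem_univ i))))
  have hε'c : ∀ j, ε' ≤ δc j := fun j => Finset.min'_le _ _ (by
    rw [hF]
    exact Finset.mem_insert_of_mem (Finset.mem_union_right _
      (Finset.mem_image_of_mem _ (Finset.mem_univ j))))
  -- tight constraints
  obtain ⟨q, hq1, hq2⟩ := rat_dense_affine
    (fun i : {i : Fin s // ipQ (a i) x = (b i : ℝ)} => a i.1)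
    (fun i => b i.1) x (fun i => i.2) ε' hε'pos
  have hdast : dist (castQ q) x < ε' := hq2
  refine ⟨q, ?_, ?_, lt_of_lt_of_le hdast hε'le⟩
  · intro i
    by_cases ht : ipQ (a i) x = (b i : ℝ)
    · rw [ipQ_castQ, hq1 ⟨i, ht⟩]
    · have hbi : (b i : ℝ) < ipQ (a i) x := lt_of_le_of_ne (hx1 i) (fun h' => ht h'.symm)
      have hda : δa i = (ipQ (a i) x - b i) / (M (a i) + 1) := by
        rw [hδa]; dsimp only; rw [if_neg ht]
      have hdlt : dist (castQ q) x < (ipQ (a i) x - b i) / (M (a i) + 1) :=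
        lt_of_lt_of_le hdast (hda ▸ hε'a i)
      have hmul : dist (castQ q) x * (M (a i) + 1) < ipQ (a i) x - b i := by
        rw [← lt_div_iff₀ (by linarith [hMnn (a i)])]
        exact hdlt
      have hb1 := hpert (a i) (castQ q)
      have hb2 := neg_le_of_abs_le hb1
      have hdn : (0 : ℝ) ≤ dist (castQ q) x := dist_nonneg
      have : M (a i) * dist (castQ q) x < ipQ (a i) x - b i := by nlinarith
      linarith
  · intro j
    have hdlt : dist (castQ q) x < (ipQ (c j) x - d j) / (M (c j) + 1) :=
      lt_of_lt_of_le hdast (hε'c j)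
    have hmul : dist (castQ q) x * (M (c j) + 1) < ipQ (c j) x - d j := by
      rw [← lt_div_iff₀ (by linarith [hMnn (c j)])]
      exact hdlt
    have hb1 := hpert (c j) (castQ q)
    have hb2 := neg_le_of_abs_le hb1
    have hdn : (0 : ℝ) ≤ dist (castQ q) x := dist_nonneg
    have : M (c j) * dist (castQ q) x < ipQ (c j) x - d j := by nlinarith
    linarith
lemma ipR_eq_ipQ {n : ℕ} (α : Fin n → ℤ) (ω : Fin n → ℝ) :
    ipR α ω = ipQ (fun j => (α j : ℚ)) ω := by
  simp [ipR, ipQ]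

lemma ipR_smul {n : ℕ} (α : Fin n → ℤ) (r : ℝ) (ω : Fin n → ℝ) :
    ipR α (r • ω) = r * ipR α ω := by
  simp only [ipR, Pi.smul_apply, smul_eq_mul, Finset.mul_sum]
  exact Finset.sum_congr rfl fun i _ => by ring

/-- every rational vector has a positive integer multiple that is an integer vector -/
lemma exists_int_multiple {n : ℕ} (q : Fin n → ℚ) :
    ∃ N : ℕ, 0 < N ∧ ∃ z : Fin n → ℤ, castR z = (N : ℝ) • castQ q := by
  classical
  refine ⟨∏ i, (q i).den, Finset.prod_pos fun i _ => (q i).pos, ?_⟩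
  set N := ∏ i, (q i).den with hN
  have hint : ∀ i, ((N : ℚ) * q i) = (((q i).num * ((N / (q i).den : ℕ) : ℤ) : ℤ) : ℚ) := by
    intro i
    have hd : (q i).den ∣ N := Finset.dvd_prod_of_mem _ (Finset.mem_univ i)
    have hm : (q i).den * (N / (q i).den) = N := Nat.mul_div_cancel' hd
    have hden : ((q i).den : ℚ) ≠ 0 := Nat.cast_ne_zero.mpr (q i).den_nz
    calc (N : ℚ) * q i = (((q i).den * (N / (q i).den) : ℕ) : ℚ) * q i := by rw [hm]
      _ = ((q i).den : ℚ) * ((N / (q i).den : ℕ) : ℚ) * q i := by push_cast; ring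
      _ = (((q i).num : ℚ) / ((q i).den : ℚ)) * ((q i).den : ℚ) * ((N / (q i).den : ℕ) : ℚ) := by
          rw [Rat.num_div_den]; ring
      _ = ((q i).num : ℚ) * ((N / (q i).den : ℕ) : ℚ) := by
          rw [div_mul_cancel₀ _ hden]
      _ = (((q i).num * ((N / (q i).den : ℕ) : ℤ) : ℤ) : ℚ) := by
          rw [Int.cast_mul, Int.cast_natCast]
  refine ⟨fun i => (q i).num * ((N / (q i).den : ℕ) : ℤ), ?_⟩
  funext i
  have := hint i
  have hreal : ((N : ℝ) * (q i : ℝ)) = (((q i).num * ((N / (q i).den : ℕ) : ℤ) : ℤ) : ℝ) := by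
    have := congrArg (fun r : ℚ => (r : ℝ)) this
    push_cast at this ⊢
    convert this using 2
  simp only [castR, castQ, Pi.smul_apply, smul_eq_mul]
  rw [← hreal]


end ConeAux

open ConeAux

/-- If `P` is a model of a nonempty rational half-open cone `C`, then the
topological closure of `C` is the smallest closed cone containing `P`:
(i) `P ⊆ cl(C)`, and (ii) any closed set `B` with `P ⊆ B` that is stable under
multiplication by positive reals contains `cl(C)`. -/
theorem closure_is_smallest_closed_cone_containing_model {n : ℕ}
    (C P : Set (Fin n → ℝ))
    (hC : IsRatHalfOpenCone C) (hne : C.Nonempty) (hP : IsConeModel C P) :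
    P ⊆ closure C ∧
      ∀ B : Set (Fin n → ℝ), IsClosed B → P ⊆ B →
        (∀ l : ℝ, 0 < l → ∀ x ∈ B, l • x ∈ B) → closure C ⊆ B := by
  obtain ⟨t, A, bA, hPrep⟩ := hP.1
  obtain ⟨d, e, φ, χ, hCrep⟩ := hC
  have hCscale : ∀ r : ℝ, 0 < r → ∀ ω ∈ C, r • ω ∈ C := by
    intro r hr ω hω
    rw [hCrep] at hω ⊢
    rw [Set.mem_setOf_eq] at hω ⊢
    refine ⟨fun i => ?_, fun j => ?_⟩
    · rw [ipR_smul]; exact mul_nonneg hr.le (hω.1 i)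
    · rw [ipR_smul]; exact mul_pos hr (hω.2 j)
  constructor
  · intro x hx
    rw [Metric.mem_closure_iff]
    intro ε hε
    have hx1 : ∀ i, (bA i : ℝ) ≤ ipQ (A i) x := by rw [hPrep] at hx; exact hx
    obtain ⟨q, hq1, _, hq3⟩ := rat_dense_mixed A bA (Fin.elim0 (α := Fin n → ℚ))
      (Fin.elim0) x hx1 (fun j => j.elim0) ε hε
    have hqP : castQ q ∈ P := by rw [hPrep]; exact hq1
    obtain ⟨N, hN, z, hz⟩ := exists_int_multiple q
    have h1 : (N : ℝ) • castQ q ∈ P := hP.2.2 N hN _ hqP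
    have h2 : (N : ℝ) • castQ q ∈ P ∩ intLattice n := ⟨h1, ⟨z, hz⟩⟩
    have h3 : (N : ℝ) • castQ q ∈ C := (hP.2.1 ▸ h2 : _ ∈ C ∩ intLattice n).1
    have hNpos : (0 : ℝ) < N := Nat.cast_pos.mpr hN
    have h4 : castQ q = ((N : ℝ)⁻¹) • ((N : ℝ) • castQ q) := by
      rw [smul_smul, inv_mul_cancel₀ (ne_of_gt hNpos), one_smul]
    have hqC : castQ q ∈ C := h4 ▸ hCscale _ (inv_pos.mpr hNpos) _ h3
    exact ⟨castQ q, hqC, by rw [dist_comm]; exact hq3⟩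
  · intro B hBc hPB hBcone
    have hCB : C ⊆ B := by
      intro ω hω
      rw [← hBc.closure_eq, Metric.mem_closure_iff]
      intro ε hε
      rw [hCrep, Set.mem_setOf_eq] at hω
      obtain ⟨q, hq1, hq2, hq3⟩ := rat_dense_mixed
        (fun i => fun j => ((φ i j : ℚ))) (fun _ => 0)
        (fun i => fun j => ((χ i j : ℚ))) (fun _ => 0) ω
        (fun i => by rw [← ipR_eq_ipQ]; simpa using hω.1 i)
        (fun j => by rw [← ipR_eq_ipQ]; simpa using hω.2 j) ε hε
      have hqC : castQ q ∈ C := by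
        rw [hCrep, Set.mem_setOf_eq]
        exact ⟨fun i => by rw [ipR_eq_ipQ]; simpa using hq1 i,
               fun j => by rw [ipR_eq_ipQ]; simpa using hq2 j⟩
      obtain ⟨N, hN, z, hz⟩ := exists_int_multiple q
      have hNpos : (0 : ℝ) < N := Nat.cast_pos.mpr hN
      have h3 : (N : ℝ) • castQ q ∈ C := hCscale _ hNpos _ hqC
      have h2 : (N : ℝ) • castQ q ∈ C ∩ intLattice n := ⟨h3, ⟨z, hz⟩⟩
      have h1 : (N : ℝ) • castQ q ∈ P := (hP.2.1 ▸ h2 : _ ∈ P ∩ intLattice n).1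
      have hB1 : (N : ℝ) • castQ q ∈ B := hPB h1
      have h4 : castQ q = ((N : ℝ)⁻¹) • ((N : ℝ) • castQ q) := by
        rw [smul_smul, inv_mul_cancel₀ (ne_of_gt hNpos), one_smul]
      have hqB : castQ q ∈ B := h4 ▸ hBcone _ (inv_pos.mpr hNpos) _ hB1
      exact ⟨castQ q, hqB, by rw [dist_comm]; exact hq3⟩
    calc closure C ⊆ closure B := closure_mono hCB
      _ = B := hBc.closure_eq
end
end

section
/- Every nonempty rational half-open cone C₀ ⊆ ℝⁿ contains a lattice point, i.e. C₀ ≠ ∅ implies C₀ ∩ ℤⁿ ≠ ∅. -/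
noncomputable section

/-- Cast of a rational vector to ℝⁿ. -/
def castQ {n : ℕ} (q : Fin n → ℚ) : Fin n → ℝ := fun i => (q i : ℝ)

/-- Rational inner product of an integer vector with a rational vector. -/
def dotQ {n : ℕ} (c : Fin n → ℤ) (q : Fin n → ℚ) : ℚ := ∑ j, (c j : ℚ) * q j

lemma ipR_castQ {n : ℕ} (c : Fin n → ℤ) (q : Fin n → ℚ) :
    ipR c (castQ q) = (dotQ c q : ℝ) := by
  simp [ipR, castQ, dotQ]

lemma ipR_smul {n : ℕ} (c : Fin n → ℤ) (t : ℝ) (x : Fin n → ℝ) :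
    ipR c (t • x) = t * ipR c x := by
  simp [ipR, Finset.mul_sum]
  exact Finset.sum_congr rfl fun j _ => by ring

lemma ipR_sum_smul {n m : ℕ} (c : Fin n → ℤ) (t : Fin m → ℝ) (v : Fin m → (Fin n → ℝ)) :
    ipR c (∑ k, t k • v k) = ∑ k, t k * ipR c (v k) := by
  simp only [ipR, Finset.sum_apply, Pi.smul_apply, smul_eq_mul, Finset.mul_sum]
  rw [Finset.sum_comm]
  exact Finset.sum_congr rfl fun k _ => Finset.sum_congr rfl fun j _ => by ring

lemma castQ_sum_smul {n m : ℕ} (s : Fin m → ℚ) (v : Fin m → (Fin n → ℚ)) :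
    castQ (∑ k, s k • v k) = ∑ k, (s k : ℝ) • castQ (v k) := by
  funext j
  simp [castQ, Finset.sum_apply]

lemma castQ_sub_smul {n : ℕ} (p : Fin n → ℚ) (a : ℚ) (u : Fin n → ℚ) :
    castQ (p - a • u) = castQ p - (a : ℝ) • castQ u := by
  funext j
  simp [castQ]

lemma dotQ_sum_smul {n m : ℕ} (c : Fin n → ℤ) (s : Fin m → ℚ) (v : Fin m → (Fin n → ℚ)) :
    dotQ c (∑ k, s k • v k) = ∑ k, s k * dotQ c (v k) := by
  simp only [dotQ, Finset.sum_apply, Pi.smul_apply, smul_eq_mul, Finset.mul_sum]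
  rw [Finset.sum_comm]
  exact Finset.sum_congr rfl fun k _ => Finset.sum_congr rfl fun j _ => by ring

lemma dotQ_sub_smul {n : ℕ} (c : Fin n → ℤ) (p : Fin n → ℚ) (a : ℚ) (u : Fin n → ℚ) :
    dotQ c (p - a • u) = dotQ c p - a * dotQ c u := by
  simp only [dotQ, Pi.sub_apply, Pi.smul_apply, smul_eq_mul, mul_sub, Finset.sum_sub_distrib,
    Finset.mul_sum]
  congr 1
  exact Finset.sum_congr rfl fun j _ => by ring

lemma continuous_ipR {n : ℕ} (c : Fin n → ℤ) : Continuous (ipR c) :=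
  continuous_finset_sum _ fun j _ => continuous_const.mul (continuous_apply j)

/-- The real solution set of a rational homogeneous linear system is spanned by
its rational solutions. -/
lemma mem_span_rat_ker {n : ℕ} (r : ℕ) (c : Fin r → (Fin n → ℤ)) (x : Fin n → ℝ)
    (hx : ∀ i, ipR (c i) x = 0) :
    x ∈ Submodule.span ℝ (castQ '' {q : Fin n → ℚ | ∀ i, dotQ (c i) q = 0}) := by
  induction r with
  | zero =>
      have hx' : x = ∑ j, x j • castQ (Pi.single j 1) := by
        funext i
        simp only [Finset.sum_apply, Pi.smul_apply, smul_eq_mul, castQ]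
        rw [Finset.sum_eq_single i]
        · simp
        · intro b _ hb; simp [Pi.single_apply, hb.symm]
        · simp
      rw [hx']
      exact Submodule.sum_mem _ fun j _ => Submodule.smul_mem _ _
        (Submodule.subset_span ⟨Pi.single j 1, fun i => i.elim0, rfl⟩)
  | succ r IH =>
      have h1 := IH (fun i => c i.succ) (fun i => hx i.succ)
      obtain ⟨m, t, v', hrep⟩ := Submodule.mem_span_set'.mp h1
      choose v hvK hvc using fun k => (v' k).2
      have hrep' : ∑ k, t k • castQ (v k) = x := by
        rw [← hrep]; exact Finset.sum_congr rfl fun k _ => by rw [hvc]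
      set a : Fin m → ℚ := fun k => dotQ (c 0) (v k) with ha
      have hsum : ∑ k, t k * (a k : ℝ) = 0 := by
        have := hx 0
        rw [← hrep', ipR_sum_smul] at this
        rw [← this]
        exact Finset.sum_congr rfl fun k _ => by rw [ipR_castQ]
      have key : ∀ w : Fin n → ℚ, (∀ i, dotQ (c i) w = 0) →
          castQ w ∈ castQ '' {q : Fin n → ℚ | ∀ i, dotQ (c i) q = 0} :=
        fun w hw => ⟨w, hw, rfl⟩
      by_cases hall : ∀ k, a k = 0
      · rw [← hrep']
        refine Submodule.sum_mem _ fun k _ => Submodule.smul_mem _ _ (Submodule.subset_span ?_)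
        refine key _ fun i => ?_
        refine Fin.cases ?_ ?_ i
        · exact hall k
        · exact fun i' => hvK k i'
      · push_neg at hall
        obtain ⟨k₀, hk₀⟩ := hall
        set w : Fin m → (Fin n → ℚ) := fun k => v k - (a k / a k₀) • v k₀ with hw
        have hwK : ∀ k i, dotQ (c i) (w k) = 0 := by
          intro k i
          rw [hw]
          simp only
          rw [dotQ_sub_smul]
          refine Fin.cases ?_ ?_ i
          · show dotQ (c 0) (v k) - a k / a k₀ * dotQ (c 0) (v k₀) = 0
            have e1 : dotQ (c 0) (v k) = a k := rfl
            have e2 : dotQ (c 0) (v k₀) = a k₀ := rfl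
            rw [e1, e2]
            rw [div_mul_cancel₀ _ hk₀, sub_self]
          · intro i'
            rw [hvK k i', hvK k₀ i']
            ring
        have hrep'' : ∑ k, t k • castQ (w k) = x := by
          simp only [hw, castQ_sub_smul, smul_sub]
          rw [Finset.sum_sub_distrib, hrep']
          have : ∑ k, t k • ((a k / a k₀ : ℚ) : ℝ) • castQ (v k₀)
              = (∑ k, t k * (a k : ℝ)) • ((a k₀ : ℝ))⁻¹ • castQ (v k₀) := by
            rw [Finset.sum_smul]
            refine Finset.sum_congr rfl fun k _ => ?_
            push_cast
            rw [smul_smul, smul_smul]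
            congr 1
            field_simp
          rw [this, hsum, zero_smul, sub_zero]
        rw [← hrep'']
        exact Submodule.sum_mem _ fun k _ => Submodule.smul_mem _ _
          (Submodule.subset_span (key _ (hwK k)))

/-- Every nonempty rational half-open cone contains a lattice point. -/
theorem ratHalfOpenCone_nonempty_lattice_point {n : ℕ}
    (C : Set (Fin n → ℝ)) (hC : IsRatHalfOpenCone C) (hne : C.Nonempty) :
    ∃ β : Fin n → ℤ, castR β ∈ C := by
  classical
  obtain ⟨d, e, φ, χ, hCeq⟩ := hC
  obtain ⟨ω, hω⟩ := hne
  rw [hCeq] at hω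
  obtain ⟨hφ, hχ⟩ := hω
  -- set up the equality constraints
  set E := {i : Fin d // ipR (φ i) ω = 0} with hE
  set eqv : E ≃ Fin (Fintype.card E) := Fintype.equivFin E with heqv
  have hspan := mem_span_rat_ker (Fintype.card E) (fun k => φ (eqv.symm k).1) ω
    (fun k => (eqv.symm k).2)
  obtain ⟨m, t, v', hrep⟩ := Submodule.mem_span_set'.mp hspan
  choose v hvK hvc using fun k => (v' k).2
  have hrep' : ∑ k, t k • castQ (v k) = ω := by
    rw [← hrep]; exact Finset.sum_congr rfl fun k _ => by rw [hvc]
  have hvK' : ∀ k (i : Fin d), ipR (φ i) ω = 0 → dotQ (φ i) (v k) = 0 := by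
    intro k i hi
    have h := hvK k (eqv ⟨i, hi⟩)
    simpa using h
  -- the open set of strict conditions
  set U : Set (Fin n → ℝ) :=
    (⋂ i : Fin d, {y | 0 < ipR (φ i) ω → 0 < ipR (φ i) y}) ∩
      ⋂ j : Fin e, {y | 0 < ipR (χ j) y} with hU
  have hUopen : IsOpen U := by
    apply IsOpen.inter
    · apply isOpen_iInter_of_finite
      intro i
      by_cases h : 0 < ipR (φ i) ω
      · have hset : {y : Fin n → ℝ | 0 < ipR (φ i) ω → 0 < ipR (φ i) y}
            = {y | 0 < ipR (φ i) y} := by ext y; simp [h]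
        rw [hset]; exact isOpen_lt continuous_const (continuous_ipR _)
      · have hset : {y : Fin n → ℝ | 0 < ipR (φ i) ω → 0 < ipR (φ i) y} = Set.univ := by
          ext y; simp [h]
        rw [hset]; exact isOpen_univ
    · exact isOpen_iInter_of_finite fun j => isOpen_lt continuous_const (continuous_ipR _)
  have hωU : ω ∈ U := ⟨Set.mem_iInter.2 fun i h => h, Set.mem_iInter.2 hχ⟩
  -- the continuous combination map
  set T : (Fin m → ℝ) → (Fin n → ℝ) := fun s => ∑ k, s k • castQ (v k) with hT
  have hTcont : Continuous T :=
    continuous_finset_sum _ fun k _ => (continuous_apply k).smul continuous_const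
  have htmem : t ∈ T ⁻¹' U := by
    have : T t = ω := hrep'
    simpa [Set.mem_preimage, this] using hωU
  obtain ⟨ε, hε, hball⟩ := Metric.isOpen_iff.mp (hUopen.preimage hTcont) t htmem
  -- pick rationals close to t
  have hsel : ∀ k : Fin m, ∃ s : ℚ, t k < s ∧ (s : ℝ) < t k + ε :=
    fun k => exists_rat_btwn (lt_add_of_pos_right (t k) hε)
  choose s hs1 hs2 using hsel
  have hsmem : (fun k => (s k : ℝ)) ∈ T ⁻¹' U := by
    apply hball
    rw [Metric.mem_ball, dist_pi_lt_iff hε]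
    intro k
    rw [Real.dist_eq, abs_sub_lt_iff]
    constructor
    · linarith [hs2 k]
    · linarith [hs1 k]
  set q0 : Fin n → ℚ := ∑ k, s k • v k with hq0
  have hq0cast : castQ q0 = T (fun k => (s k : ℝ)) := castQ_sum_smul s v
  have hq0U : castQ q0 ∈ U := by rw [hq0cast]; exact hsmem
  have hq0K : ∀ i : Fin d, ipR (φ i) ω = 0 → dotQ (φ i) q0 = 0 := by
    intro i hi
    rw [hq0, dotQ_sum_smul]
    exact Finset.sum_eq_zero fun k _ => by rw [hvK' k i hi, mul_zero]
  -- clear denominators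
  set N : ℕ := ∏ i, (q0 i).den with hN
  have hNpos : 0 < N := Finset.prod_pos fun i _ => (q0 i).pos
  have hdvd : ∀ i, (q0 i).den ∣ N := fun i => Finset.dvd_prod_of_mem _ (Finset.mem_univ i)
  refine ⟨fun i => (q0 i).num * ((N / (q0 i).den : ℕ) : ℤ), ?_⟩
  set β : Fin n → ℤ := fun i => (q0 i).num * ((N / (q0 i).den : ℕ) : ℤ) with hβdef
  have hβ : ∀ i, ((β i : ℚ)) = (N : ℚ) * q0 i := by
    intro i
    have hd : ((q0 i).den : ℚ) ≠ 0 := Nat.cast_ne_zero.2 (q0 i).den_nz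
    have hdenN : ((q0 i).den : ℚ) * ((N / (q0 i).den : ℕ) : ℚ) = (N : ℚ) := by
      rw [← Nat.cast_mul, Nat.mul_div_cancel' (hdvd i)]
    have hcastdiv : ((N / (q0 i).den : ℕ) : ℚ) = (N : ℚ) / (((q0 i).den : ℕ) : ℚ) := by
      rw [eq_div_iff hd, mul_comm]; exact hdenN
    calc ((β i : ℚ)) = ((q0 i).num : ℚ) * ((N : ℚ) / (((q0 i).den : ℕ) : ℚ)) := by
          simp only [hβdef, Int.cast_mul, Int.cast_natCast, hcastdiv]
      _ = (N : ℚ) * (((q0 i).num : ℚ) / (((q0 i).den : ℕ) : ℚ)) := by ring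
      _ = (N : ℚ) * q0 i := by rw [Rat.num_div_den]
  have hcast : castR β = (N : ℝ) • castQ q0 := by
    funext i
    have h := hβ i
    have : ((β i : ℚ) : ℝ) = (((N : ℚ) * q0 i : ℚ) : ℝ) := by rw [h]
    push_cast at this
    simpa [castR, castQ] using this
  have hNR : (0 : ℝ) < (N : ℝ) := by exact_mod_cast hNpos
  rw [hCeq]
  constructor
  · intro i
    rw [hcast, ipR_smul, ipR_castQ]
    by_cases hi : ipR (φ i) ω = 0
    · rw [hq0K i hi]; simp
    · have hpos : 0 < ipR (φ i) ω := lt_of_le_of_ne (hφ i) (Ne.symm hi)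
      have h2 : 0 < ipR (φ i) (castQ q0) := Set.mem_iInter.1 hq0U.1 i hpos
      rw [ipR_castQ] at h2
      positivity
  · intro j
    rw [hcast, ipR_smul]
    have h2 : 0 < ipR (χ j) (castQ q0) := Set.mem_iInter.1 hq0U.2 j
    positivity
end
end
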